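/- arXiv:2505.19710 — 4 statements merged into one kernel-verified Lean document; each statement's English description precedes it below -/
import Mathlib

section
/- Let T > 0, n ≥ 1, let μ_1, …, μ_n be positive real numbers and c_1, …, c_n real numbers, and define r(t) = Σ_{k=1}^n c_k sin(μ_k t). Then for all f, g ∈ L²(0, T): ∫₀ᵀ ∫₀ᵀ ( ∫_{|t−s|}^{2T−t−s} r(τ) dτ ) f(s) g(t) ds dt = Σ_{k=1}^n (2 c_k / μ_k) · (∫₀ᵀ sin(μ_k (T − t)) f(t) dt) · (∫₀ᵀ sin(μ_k (T − s)) g(s) ds). -/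
open MeasureTheory intervalIntegral Finset

lemma sin_integral_aux (μ a b : ℝ) (hμ : μ ≠ 0) :
    ∫ τ in a..b, Real.sin (μ * τ) = (Real.cos (μ * a) - Real.cos (μ * b)) / μ := by
  rw [intervalIntegral.integral_comp_mul_left (fun x => Real.sin x) hμ,
    integral_sin, smul_eq_mul]
  field_simp

lemma kernel_eq (T : ℝ) (n : ℕ) (μ : Fin n → ℝ) (hμ : ∀ k, 0 < μ k) (c : Fin n → ℝ)
    (r : ℝ → ℝ) (hr : ∀ t, r t = ∑ k, c k * Real.sin (μ k * t)) (t s : ℝ) :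
    (∫ τ in |t - s|..(2 * T - t - s), r τ)
      = ∑ k, (2 * c k / μ k) * Real.sin (μ k * (T - t)) * Real.sin (μ k * (T - s)) := by
  have : (∫ τ in |t - s|..(2 * T - t - s), r τ)
      = ∑ k, c k * ∫ τ in |t - s|..(2 * T - t - s), Real.sin (μ k * τ) := by
    rw [intervalIntegral.integral_congr (g := fun τ => ∑ k, c k * Real.sin (μ k * τ))
      (fun τ _ => hr τ)]
    rw [intervalIntegral.integral_finset_sum]
    · simp [intervalIntegral.integral_const_mul]
    · intro k _
      exact ((continuous_const.mul (Real.continuous_sin.comp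
        (continuous_const.mul continuous_id))).intervalIntegrable _ _)
  rw [this]
  refine Finset.sum_congr rfl fun k _ => ?_
  have hk := (hμ k).ne'
  rw [sin_integral_aux _ _ _ hk]
  have habs : Real.cos (μ k * |t - s|) = Real.cos (μ k * (t - s)) := by
    rw [← Real.cos_abs (μ k * (t - s)), abs_mul, abs_of_pos (hμ k)]
  rw [habs, Real.cos_sub_cos]
  have h1 : (μ k * (t - s) + μ k * (2 * T - t - s)) / 2 = μ k * (T - s) := by ring
  have h2 : (μ k * (t - s) - μ k * (2 * T - t - s)) / 2 = -(μ k * (T - t)) := by ring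
  rw [h1, h2, Real.sin_neg]
  field_simp

/-- Representation of the connecting operator of the finite Krein–Stieltjes string in terms
of the response function `r(t) = Σ_k c_k sin(μ_k t)`: for `f, g ∈ L²(0,T)`,
`∫₀ᵀ∫₀ᵀ (∫_{|t-s|}^{2T-t-s} r(τ) dτ) f(s) g(t) ds dt
  = Σ_k (2c_k/μ_k) (∫₀ᵀ sin(μ_k(T-t)) f(t) dt)(∫₀ᵀ sin(μ_k(T-s)) g(s) ds)`. -/
theorem connecting_operator_representation
    (T : ℝ) (hT : 0 < T) (n : ℕ) (hn : 1 ≤ n)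
    (μ : Fin n → ℝ) (hμpos : ∀ k, 0 < μ k) (c : Fin n → ℝ)
    (r : ℝ → ℝ) (hr : ∀ t, r t = ∑ k, c k * Real.sin (μ k * t))
    (f g : ℝ → ℝ)
    (hf : MemLp f 2 (volume.restrict (Set.Ioo 0 T)))
    (hg : MemLp g 2 (volume.restrict (Set.Ioo 0 T))) :
    (∫ t in (0:ℝ)..T, ∫ s in (0:ℝ)..T,
        (∫ τ in |t - s|..(2 * T - t - s), r τ) * f s * g t)
      = ∑ k, (2 * c k / μ k) *
          (∫ t in (0:ℝ)..T, Real.sin (μ k * (T - t)) * f t) *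
          (∫ s in (0:ℝ)..T, Real.sin (μ k * (T - s)) * g s) := by
  haveI : IsFiniteMeasure (volume.restrict (Set.Ioo 0 T)) := by
    constructor
    rw [Measure.restrict_apply_univ]
    exact (Real.volume_Ioo (a := 0) (b := T)) ▸ ENNReal.ofReal_lt_top
  have hint : ∀ h : ℝ → ℝ, MemLp h 2 (volume.restrict (Set.Ioo 0 T)) →
      IntervalIntegrable h volume 0 T := by
    intro h hh
    have h1 : Integrable h (volume.restrict (Set.Ioo 0 T)) :=
      memLp_one_iff_integrable.mp (hh.mono_exponent (by norm_num))
    have h2 : IntegrableOn h (Set.Ioc 0 T) volume := by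
      have := Measure.restrict_congr_set (μ := volume) (Ioo_ae_eq_Ioc (a := 0) (b := T))
      rwa [IntegrableOn, ← this]
    exact (intervalIntegrable_iff_integrableOn_Ioc_of_le hT.le).mpr h2
  have hfI := hint f hf
  have hgI := hint g hg
  have hsin : ∀ k, ContinuousOn (fun x : ℝ => Real.sin (μ k * (T - x))) (Set.uIcc 0 T) :=
    fun k => (Real.continuous_sin.comp
      (continuous_const.mul (continuous_const.sub continuous_id))).continuousOn
  have hsfI : ∀ k, IntervalIntegrable (fun x => Real.sin (μ k * (T - x)) * f x) volume 0 T :=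
    fun k => hfI.continuousOn_mul (hsin k)
  have hsgI : ∀ k, IntervalIntegrable (fun x => Real.sin (μ k * (T - x)) * g x) volume 0 T :=
    fun k => hgI.continuousOn_mul (hsin k)
  set F : Fin n → ℝ := fun k => ∫ t in (0:ℝ)..T, Real.sin (μ k * (T - t)) * f t with hF
  have key : ∀ t : ℝ, (∫ s in (0:ℝ)..T,
      (∫ τ in |t - s|..(2 * T - t - s), r τ) * f s * g t)
      = ∑ k, (2 * c k / μ k * F k) * (Real.sin (μ k * (T - t)) * g t) := by
    intro t
    have e1 : ∀ s : ℝ, (∫ τ in |t - s|..(2 * T - t - s), r τ) * f s * g t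
        = ∑ k, (2 * c k / μ k * Real.sin (μ k * (T - t)) * g t)
            * (Real.sin (μ k * (T - s)) * f s) := by
      intro s
      rw [kernel_eq T n μ hμpos c r hr t s, Finset.sum_mul, Finset.sum_mul]
      exact Finset.sum_congr rfl fun k _ => by ring
    rw [intervalIntegral.integral_congr (fun s _ => e1 s)]
    rw [intervalIntegral.integral_finset_sum (fun k _ => (hsfI k).const_mul _)]
    refine Finset.sum_congr rfl fun k _ => ?_
    rw [intervalIntegral.integral_const_mul]
    ring
  rw [intervalIntegral.integral_congr (fun t _ => key t)]
  rw [intervalIntegral.integral_finset_sum (fun k _ => (hsgI k).const_mul _)]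
  refine Finset.sum_congr rfl fun k _ => ?_
  rw [intervalIntegral.integral_const_mul]
end

section
/- For every natural number n and every real number a: ∫₀¹ T_{2n+1}(x) · sin(a x) / √(1 − x²) dx = (−1)ⁿ · (π/2) · J_{2n+1}(a). -/
open Polynomial Real MeasureTheory intervalIntegral

/-- The Bessel function of the first kind of integer order `m`,
`J_m(x) = (1/π) ∫₀^π cos(mθ - x sin θ) dθ`. -/
noncomputable def besselJ (m : ℤ) (x : ℝ) : ℝ :=
  (1 / Real.pi) * ∫ θ in (0:ℝ)..Real.pi, Real.cos (m * θ - x * Real.sin θ)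

open Set Filter Topology in
lemma aux_integrable (n : ℕ) (a : ℝ) :
    IntervalIntegrable (fun x : ℝ =>
      (Polynomial.Chebyshev.T ℝ (2 * (n : ℤ) + 1)).eval x * Real.sin (a * x)
        / Real.sqrt (1 - x ^ 2)) volume 0 1 := by
  have hg : IntervalIntegrable (fun x : ℝ => (1 - x) ^ (-(1/2) : ℝ)) volume 0 1 := by
    have := (intervalIntegrable_rpow' (a := 0) (b := 1) (r := -(1/2)) (by norm_num)).comp_sub_left 1
    simpa using this.symm
  refine hg.mono_fun ?_ ?_
  · refine (Measurable.aestronglyMeasurable ?_).restrict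
    exact (((Polynomial.Chebyshev.T ℝ (2 * (n : ℤ) + 1)).continuous_aeval).mul
      (Real.continuous_sin.comp (continuous_const.mul continuous_id))).measurable.div
      (Real.continuous_sqrt.comp (continuous_const.sub (continuous_pow 2))).measurable
  · filter_upwards [ae_restrict_mem measurableSet_uIoc] with x hx
    rw [uIoc_of_le (by norm_num : (0:ℝ) ≤ 1)] at hx
    obtain ⟨hx0, hx1⟩ := hx
    have hTs : |(Polynomial.Chebyshev.T ℝ (2 * (n : ℤ) + 1)).eval x * Real.sin (a * x)| ≤ 1 := by
      rw [abs_mul]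
      have hT : |(Polynomial.Chebyshev.T ℝ (2 * (n : ℤ) + 1)).eval x| ≤ 1 := by
        have hx' : x = Real.cos (Real.arccos x) :=
          (Real.cos_arccos (by linarith) (by linarith)).symm
        rw [hx', Polynomial.Chebyshev.T_real_cos]
        exact Real.abs_cos_le_one _
      calc |(Polynomial.Chebyshev.T ℝ (2 * (n : ℤ) + 1)).eval x| * |Real.sin (a * x)| ≤ 1 * 1 :=
            mul_le_mul hT (Real.abs_sin_le_one _) (abs_nonneg _) (by norm_num)
        _ = 1 := by norm_num
    have hrpow : (1 - x) ^ (-(1/2) : ℝ) = 1 / Real.sqrt (1 - x) := by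
      rw [Real.rpow_neg (by linarith), one_div, Real.sqrt_eq_rpow]
      norm_num
    rw [Real.norm_eq_abs, Real.norm_eq_abs, hrpow, abs_div,
      abs_of_nonneg (Real.sqrt_nonneg _),
      abs_of_nonneg (one_div_nonneg.mpr (Real.sqrt_nonneg _))]
    rcases eq_or_lt_of_le hx1 with h1 | h1
    · subst h1; simp
    · have hsx : Real.sqrt (1 - x) ≤ Real.sqrt (1 - x ^ 2) := by
        apply Real.sqrt_le_sqrt; nlinarith
      exact div_le_div₀ (by norm_num) hTs (Real.sqrt_pos.mpr (by linarith)) hsx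

open Set Filter Topology in
lemma aux_subst (n : ℕ) (a : ℝ) {b : ℝ} (hb : b ∈ Set.Ioo (0:ℝ) 1) :
    (∫ x in (0:ℝ)..b,
        (Polynomial.Chebyshev.T ℝ (2 * (n : ℤ) + 1)).eval x * Real.sin (a * x)
          / Real.sqrt (1 - x ^ 2))
      = ∫ θ in Real.arccos b..(Real.pi/2),
          Real.cos ((2 * (n : ℤ) + 1) * θ) * Real.sin (a * Real.cos θ) := by
  obtain ⟨hb0, hb1⟩ := hb
  set F : ℝ → ℝ := fun x =>
    (Polynomial.Chebyshev.T ℝ (2 * (n : ℤ) + 1)).eval x * Real.sin (a * x)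
      / Real.sqrt (1 - x ^ 2) with hF
  have hacb : Real.arccos b ≤ Real.pi / 2 := by
    rw [Real.arccos_eq_pi_div_two_sub_arcsin]
    have := Real.arcsin_nonneg.mpr hb0.le
    linarith
  have hacb0 : 0 < Real.arccos b := Real.arccos_pos.mpr hb1
  have huicc : Set.uIcc (Real.arccos b) (Real.pi/2) = Set.Icc (Real.arccos b) (Real.pi/2) :=
    Set.uIcc_of_le hacb
  have himg : Real.cos '' Set.uIcc (Real.arccos b) (Real.pi/2) ⊆ Set.Icc 0 b := by
    rw [huicc]
    rintro _ ⟨θ, ⟨h1, h2⟩, rfl⟩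
    constructor
    · rw [show (0:ℝ) = Real.cos (Real.pi/2) by rw [Real.cos_pi_div_two]]
      apply Real.cos_le_cos_of_nonneg_of_le_pi (by linarith) (by linarith [Real.pi_pos]) h2
    · rw [show b = Real.cos (Real.arccos b) by rw [Real.cos_arccos (by linarith) hb1.le]]
      apply Real.cos_le_cos_of_nonneg_of_le_pi hacb0.le (by linarith [Real.pi_pos]) h1
  have hFcont : ContinuousOn F (Set.Icc 0 b) := by
    apply ContinuousOn.div
    · exact (((Polynomial.Chebyshev.T ℝ (2 * (n : ℤ) + 1)).continuous_aeval).mul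
        (Real.continuous_sin.comp (continuous_const.mul continuous_id))).continuousOn
    · exact (Real.continuous_sqrt.comp (continuous_const.sub (continuous_pow 2))).continuousOn
    · rintro x ⟨hx0, hx1⟩
      exact Real.sqrt_ne_zero'.mpr (by nlinarith)
  have hsub := intervalIntegral.integral_comp_smul_deriv'
    (f := Real.cos) (f' := fun θ => -Real.sin θ) (g := F)
    (a := Real.arccos b) (b := Real.pi/2)
    (fun θ _ => Real.hasDerivAt_cos θ) (Real.continuous_sin.neg.continuousOn)
    (hFcont.mono himg)
  rw [Real.cos_arccos (by linarith) hb1.le, Real.cos_pi_div_two,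
    show (∫ x in b..(0:ℝ), F x) = -∫ x in (0:ℝ)..b, F x from
      intervalIntegral.integral_symm 0 b] at hsub
  have hcongr : (∫ θ in Real.arccos b..(Real.pi/2), (-Real.sin θ) • (F ∘ Real.cos) θ)
      = -∫ θ in Real.arccos b..(Real.pi/2),
          Real.cos ((2 * (n : ℤ) + 1) * θ) * Real.sin (a * Real.cos θ) := by
    rw [← intervalIntegral.integral_neg]
    apply intervalIntegral.integral_congr
    intro θ hθ
    rw [huicc] at hθ
    obtain ⟨h1, h2⟩ := hθ
    have hsθ : 0 < Real.sin θ :=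
      Real.sin_pos_of_pos_of_lt_pi (lt_of_lt_of_le hacb0 h1) (by linarith [Real.pi_pos])
    simp only [Function.comp, smul_eq_mul, hF]
    have hsq : Real.sqrt (1 - Real.cos θ ^ 2) = Real.sin θ := by
      rw [show 1 - Real.cos θ ^ 2 = Real.sin θ ^ 2 by nlinarith [Real.sin_sq_add_cos_sq θ],
        Real.sqrt_sq hsθ.le]
    rw [hsq, Polynomial.Chebyshev.T_real_cos]
    field_simp
    push_cast; ring
  rw [show (∫ θ in Real.arccos b..(Real.pi/2), (fun θ => -Real.sin θ) θ • (F ∘ Real.cos) θ)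
      = ∫ θ in Real.arccos b..(Real.pi/2), (-Real.sin θ) • (F ∘ Real.cos) θ from rfl,
    hcongr] at hsub
  linarith [hsub]

open Set Filter Topology in
lemma aux_bessel (n : ℕ) (a : ℝ) :
    (-1) ^ n * (Real.pi / 2) * besselJ (2 * (n : ℤ) + 1) a
      = ∫ θ in (0:ℝ)..(Real.pi/2),
          Real.cos ((2 * (n : ℤ) + 1) * θ) * Real.sin (a * Real.cos θ) := by
  have hπ := Real.pi_ne_zero
  set m : ℤ := 2 * (n : ℤ) + 1 with hm
  have h1 : (∫ θ in (0:ℝ)..Real.pi, Real.cos ((m:ℝ) * θ - a * Real.sin θ))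
      = ∫ u in (-(Real.pi/2))..(Real.pi/2),
          Real.cos ((m:ℝ) * (Real.pi/2 - u) - a * Real.sin (Real.pi/2 - u)) := by
    rw [intervalIntegral.integral_comp_sub_left
      (fun θ => Real.cos ((m:ℝ) * θ - a * Real.sin θ)) (Real.pi/2)]
    norm_num
  have key : ∀ u : ℝ, Real.cos ((m:ℝ) * (Real.pi/2 - u) - a * Real.sin (Real.pi/2 - u))
      = (-1) ^ n * Real.sin ((m:ℝ) * u + a * Real.cos u) := by
    intro u
    rw [Real.sin_pi_div_two_sub]
    have e : (m:ℝ) * (Real.pi/2 - u) - a * Real.cos u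
        = (n:ℝ) * Real.pi - (((m:ℝ) * u + a * Real.cos u) - Real.pi/2) := by
      rw [hm]; push_cast; ring
    rw [e, Real.cos_nat_mul_pi_sub, Real.cos_sub_pi_div_two]
  have h2 : (∫ u in (-(Real.pi/2))..(Real.pi/2),
        Real.cos ((m:ℝ) * (Real.pi/2 - u) - a * Real.sin (Real.pi/2 - u)))
      = (-1) ^ n * ∫ u in (-(Real.pi/2))..(Real.pi/2),
          Real.sin ((m:ℝ) * u + a * Real.cos u) := by
    simp_rw [key]
    rw [intervalIntegral.integral_const_mul]
  have hcont : ∀ b c : ℝ, IntervalIntegrable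
      (fun u : ℝ => Real.sin ((m:ℝ) * u + a * Real.cos u)) volume b c := fun b c =>
    (Real.continuous_sin.comp ((continuous_const.mul continuous_id).add
      (continuous_const.mul Real.continuous_cos))).intervalIntegrable b c
  have hcont2 : ∀ b c : ℝ, IntervalIntegrable
      (fun u : ℝ => Real.sin ((m:ℝ) * (-u) + a * Real.cos (-u))) volume b c := fun b c =>
    (Real.continuous_sin.comp ((continuous_const.mul continuous_neg).add
      (continuous_const.mul (Real.continuous_cos.comp continuous_neg)))).intervalIntegrable b c
  have h3 : (∫ u in (-(Real.pi/2))..(Real.pi/2), Real.sin ((m:ℝ) * u + a * Real.cos u))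
      = 2 * ∫ θ in (0:ℝ)..(Real.pi/2), Real.cos ((m:ℝ) * θ) * Real.sin (a * Real.cos θ) := by
    have hadj := intervalIntegral.integral_add_adjacent_intervals
      (a := -(Real.pi/2)) (b := 0) (c := Real.pi/2) (hcont _ _) (hcont _ _)
    have hneg : (∫ u in (-(Real.pi/2))..(0:ℝ), Real.sin ((m:ℝ) * u + a * Real.cos u))
        = ∫ u in (0:ℝ)..(Real.pi/2), Real.sin ((m:ℝ) * (-u) + a * Real.cos (-u)) := by
      rw [intervalIntegral.integral_comp_neg
        (fun u => Real.sin ((m:ℝ) * u + a * Real.cos u))]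
      norm_num
    have hsum : (∫ u in (0:ℝ)..(Real.pi/2), Real.sin ((m:ℝ) * (-u) + a * Real.cos (-u)))
        + (∫ u in (0:ℝ)..(Real.pi/2), Real.sin ((m:ℝ) * u + a * Real.cos u))
        = ∫ u in (0:ℝ)..(Real.pi/2),
            (Real.sin ((m:ℝ) * (-u) + a * Real.cos (-u))
              + Real.sin ((m:ℝ) * u + a * Real.cos u)) :=
      (intervalIntegral.integral_add (hcont2 _ _) (hcont _ _)).symm
    have hpt : ∀ u : ℝ, Real.sin ((m:ℝ) * (-u) + a * Real.cos (-u))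
        + Real.sin ((m:ℝ) * u + a * Real.cos u)
        = 2 * (Real.cos ((m:ℝ) * u) * Real.sin (a * Real.cos u)) := by
      intro u
      rw [Real.cos_neg]
      rw [show (m:ℝ) * (-u) + a * Real.cos u = a * Real.cos u - (m:ℝ) * u by ring,
        show (m:ℝ) * u + a * Real.cos u = a * Real.cos u + (m:ℝ) * u by ring,
        Real.sin_sub, Real.sin_add]
      ring
    simp_rw [hpt] at hsum
    rw [intervalIntegral.integral_const_mul] at hsum
    linarith [hadj, hneg, hsum]
  have hmr : ((m:ℤ):ℝ) = 2 * ((n:ℤ):ℝ) + 1 := by rw [hm]; push_cast; ring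
  rw [besselJ, h1, h2, h3, ← hmr]
  have hsq : ((-1:ℝ)) ^ n * ((-1:ℝ)) ^ n = 1 := by
    rw [← pow_add]
    exact Even.neg_one_pow ⟨n, by ring⟩
  have hfin : ∀ I : ℝ, (-1:ℝ)^n * (Real.pi/2) * (1/Real.pi * ((-1:ℝ)^n * (2*I))) = I := by
    intro I
    have e : (-1:ℝ)^n * (Real.pi/2) * (1/Real.pi * ((-1:ℝ)^n * (2*I)))
        = ((-1:ℝ)^n*(-1:ℝ)^n) * ((Real.pi * (1/Real.pi)) * I) := by ring
    rw [e, hsq, mul_one_div_cancel hπ, one_mul, one_mul]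
  exact hfin _

open Set Filter Topology in
lemma aux_glue (n : ℕ) (a : ℝ) :
    (∫ x in (0:ℝ)..1,
        (Polynomial.Chebyshev.T ℝ (2 * (n : ℤ) + 1)).eval x * Real.sin (a * x)
          / Real.sqrt (1 - x ^ 2))
      = ∫ θ in (0:ℝ)..(Real.pi/2),
          Real.cos ((2 * (n : ℤ) + 1) * θ) * Real.sin (a * Real.cos θ) := by
  set F : ℝ → ℝ := fun x =>
    (Polynomial.Chebyshev.T ℝ (2 * (n : ℤ) + 1)).eval x * Real.sin (a * x)
      / Real.sqrt (1 - x ^ 2) with hF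
  set G : ℝ → ℝ := fun θ =>
    Real.cos ((2 * (n : ℤ) + 1) * θ) * Real.sin (a * Real.cos θ) with hG
  have hGcont : Continuous G :=
    (Real.continuous_cos.comp (continuous_const.mul continuous_id)).mul
      (Real.continuous_sin.comp (continuous_const.mul Real.continuous_cos))
  -- Φ is continuous on [0,1]
  have hΦ : ContinuousOn (fun b => ∫ x in (0:ℝ)..b, F x) (Set.Icc 0 1) := by
    have h := intervalIntegral.continuousOn_primitive_interval (a := 0) (b := 1)
      (μ := volume) (f := F) ?_
    · rwa [Set.uIcc_of_le (by norm_num : (0:ℝ) ≤ 1)] at h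
    · rw [Set.uIcc_of_le (by norm_num : (0:ℝ) ≤ 1)]
      exact (intervalIntegrable_iff_integrableOn_Icc_of_le (by norm_num)).mp
        (aux_integrable n a)
  -- Ψ is continuous
  have hΨ : Continuous (fun c : ℝ => ∫ θ in c..(Real.pi/2), G θ) := by
    have h := intervalIntegral.continuous_primitive (μ := volume)
      (fun a b => hGcont.intervalIntegrable a b) (Real.pi/2)
    have : (fun c : ℝ => ∫ θ in c..(Real.pi/2), G θ)
        = fun c : ℝ => -(∫ θ in (Real.pi/2)..c, G θ) := by
      funext c; rw [intervalIntegral.integral_symm]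
    rw [this]
    exact h.neg
  haveI : (𝓝[Set.Ioo (0:ℝ) 1] 1).NeBot := by
    refine mem_closure_iff_nhdsWithin_neBot.mp ?_
    rw [closure_Ioo (by norm_num : (0:ℝ) ≠ 1)]
    exact ⟨by norm_num, le_refl 1⟩
  have tendΦ : Tendsto (fun b => ∫ x in (0:ℝ)..b, F x) (𝓝[Set.Ioo (0:ℝ) 1] 1)
      (𝓝 (∫ x in (0:ℝ)..1, F x)) :=
    ((hΦ 1 ⟨by norm_num, le_refl 1⟩).mono_left
      (nhdsWithin_mono 1 Set.Ioo_subset_Icc_self))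
  have tendΨ : Tendsto (fun b => ∫ θ in Real.arccos b..(Real.pi/2), G θ)
      (𝓝[Set.Ioo (0:ℝ) 1] 1) (𝓝 (∫ θ in (0:ℝ)..(Real.pi/2), G θ)) := by
    have hc : Continuous fun b : ℝ => ∫ θ in Real.arccos b..(Real.pi/2), G θ :=
      hΨ.comp Real.continuous_arccos
    have := (hc.tendsto 1).mono_left (nhdsWithin_le_nhds (s := Set.Ioo (0:ℝ) 1))
    simpa [Real.arccos_one] using this
  have heq : (fun b => ∫ x in (0:ℝ)..b, F x)
      =ᶠ[𝓝[Set.Ioo (0:ℝ) 1] 1] fun b => ∫ θ in Real.arccos b..(Real.pi/2), G θ := by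
    filter_upwards [self_mem_nhdsWithin] with b hb
    exact aux_subst n a hb
  exact tendsto_nhds_unique (tendΦ.congr' heq) tendΨ

/-- For every `n : ℕ` and `a : ℝ`,
`∫₀¹ T_{2n+1}(x) sin(ax) / √(1-x²) dx = (-1)ⁿ (π/2) J_{2n+1}(a)`,
where `T` is the Chebyshev polynomial of the first kind. -/
theorem integral_chebyshevT_sin_eq_besselJ (n : ℕ) (a : ℝ) :
    (∫ x in (0:ℝ)..1,
        (Polynomial.Chebyshev.T ℝ (2 * (n : ℤ) + 1)).eval x * Real.sin (a * x)
          / Real.sqrt (1 - x ^ 2))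
      = (-1) ^ n * (Real.pi / 2) * besselJ (2 * (n : ℤ) + 1) a := by
  rw [aux_glue n a]
  exact (aux_bessel n a).symm
end

section
/- For all real numbers z and θ, the series Σ_{k=0}^∞ J_{2k+1}(z) · sin((2k+1)θ) converges and sin(z · sin θ) = 2 · Σ_{k=0}^∞ J_{2k+1}(z) · sin((2k+1)θ). -/
open Real MeasureTheory intervalIntegral

section JacobiAngerAux
open Set

noncomputable def jaB (z ν : ℝ) : ℝ := ∫ φ in (0:ℝ)..Real.pi, Real.sin (ν * φ) * Real.sin (z * Real.sin φ)

lemma jaB_flip (g : ℝ → ℝ) :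
    (∫ φ in (0:ℝ)..Real.pi, g φ) = ∫ φ in (0:ℝ)..Real.pi, g (Real.pi - φ) := by
  rw [intervalIntegral.integral_comp_sub_left g Real.pi]; norm_num

lemma sin_odd_pi_sub (k : ℕ) (x : ℝ) : Real.sin ((2*(k:ℝ)+1) * (Real.pi - x)) = Real.sin ((2*(k:ℝ)+1) * x) := by
  have : (2*(k:ℝ)+1) * (Real.pi - x) = (Real.pi - (2*(k:ℝ)+1) * x) + (k:ℤ) * (2 * Real.pi) := by
    push_cast; ring
  rw [this, Real.sin_add_int_mul_two_pi, Real.sin_pi_sub]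

lemma cos_odd_pi_sub (k : ℕ) (x : ℝ) : Real.cos ((2*(k:ℝ)+1) * (Real.pi - x)) = -Real.cos ((2*(k:ℝ)+1) * x) := by
  have : (2*(k:ℝ)+1) * (Real.pi - x) = (Real.pi - (2*(k:ℝ)+1) * x) + (k:ℤ) * (2 * Real.pi) := by
    push_cast; ring
  rw [this, Real.cos_add_int_mul_two_pi, Real.cos_pi_sub]

lemma sin_even_pi_sub (k : ℕ) (x : ℝ) : Real.sin ((2*(k:ℝ)) * (Real.pi - x)) = -Real.sin ((2*(k:ℝ)) * x) := by
  have : (2*(k:ℝ)) * (Real.pi - x) = (-((2*(k:ℝ)) * x)) + (k:ℤ) * (2 * Real.pi) := by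
    push_cast; ring
  rw [this, Real.sin_add_int_mul_two_pi, Real.sin_neg]

lemma jaB_even (z : ℝ) (k : ℕ) : jaB z (2*k) = 0 := by
  have h' : jaB z (2*(k:ℝ)) = - jaB z (2*(k:ℝ)) := by
    unfold jaB
    conv_lhs => rw [jaB_flip (fun φ => Real.sin ((2*(k:ℝ)) * φ) * Real.sin (z * Real.sin φ))]
    simp only [sin_even_pi_sub, Real.sin_pi_sub, neg_mul, intervalIntegral.integral_neg]
  linarith

lemma besselJ_odd_aux (z : ℝ) (k : ℕ) :
    (∫ φ in (0:ℝ)..Real.pi, Real.cos ((2*(k:ℝ)+1) * φ - z * Real.sin φ))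
      = jaB z (2*(k:ℝ)+1) := by
  have hc : ∀ φ : ℝ, Real.cos ((2*(k:ℝ)+1) * φ - z * Real.sin φ)
      = Real.cos ((2*(k:ℝ)+1) * φ) * Real.cos (z * Real.sin φ)
        + Real.sin ((2*(k:ℝ)+1) * φ) * Real.sin (z * Real.sin φ) := fun φ => Real.cos_sub _ _
  have i1 : IntervalIntegrable (fun φ => Real.cos ((2*(k:ℝ)+1) * φ) * Real.cos (z * Real.sin φ)) volume 0 Real.pi := by
    apply Continuous.intervalIntegrable; continuity
  have i2 : IntervalIntegrable (fun φ => Real.sin ((2*(k:ℝ)+1) * φ) * Real.sin (z * Real.sin φ)) volume 0 Real.pi := by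
    apply Continuous.intervalIntegrable; continuity
  simp only [hc]
  rw [intervalIntegral.integral_add i1 i2]
  have hA : (∫ φ in (0:ℝ)..Real.pi, Real.cos ((2*(k:ℝ)+1) * φ) * Real.cos (z * Real.sin φ)) = 0 := by
    have h := jaB_flip (fun φ => Real.cos ((2*(k:ℝ)+1) * φ) * Real.cos (z * Real.sin φ))
    simp only [cos_odd_pi_sub, Real.sin_pi_sub] at h
    have h2 : (∫ φ in (0:ℝ)..Real.pi, -Real.cos ((2*(k:ℝ)+1) * φ) * Real.cos (z * Real.sin φ))
        = -∫ φ in (0:ℝ)..Real.pi, Real.cos ((2*(k:ℝ)+1) * φ) * Real.cos (z * Real.sin φ) := by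
      simp only [neg_mul, intervalIntegral.integral_neg]
    rw [h2] at h; linarith
  rw [hA, zero_add]; rfl

lemma besselJ_odd (z : ℝ) (k : ℕ) :
    besselJ (2*(k:ℤ)+1) z = (1/Real.pi) * jaB z (2*(k:ℝ)+1) := by
  unfold besselJ
  rw [← besselJ_odd_aux z k]
  norm_num

noncomputable def jaF (z : ℝ) : ℝ → ℂ := fun φ => ((Real.sin (z * Real.sin φ) : ℝ) : ℂ)

lemma h2pi : (0:ℝ) < 0 + 2 * Real.pi := by positivity

lemma fourier_eval (n : ℤ) (x : ℝ) :
    (fourier (-n) (x : AddCircle (0 + 2*Real.pi - 0))) = Complex.exp (-(Complex.I * n * x)) := by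
  rw [fourier_coe_apply]
  congr 1
  have hpi : (Real.pi : ℂ) ≠ 0 := by exact_mod_cast Real.pi_ne_zero
  push_cast
  field_simp
  ring

lemma exp_diff (w : ℂ) : Complex.exp (-(Complex.I*w)) - Complex.exp (Complex.I*w)
    = -2*Complex.I*Complex.sin w := by
  rw [Complex.sin]
  have : Complex.exp (-w*Complex.I) = Complex.exp (-(Complex.I*w)) := by ring_nf
  rw [this]
  have h2 : Complex.exp (w*Complex.I) = Complex.exp (Complex.I*w) := by ring_nf
  rw [h2]
  have := Complex.I_sq
  field_simp
  ring_nf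
  rw [Complex.I_sq]
  ring

lemma jaC (z : ℝ) (n : ℤ) :
    fourierCoeffOn h2pi (jaF z) n = -(Complex.I/Real.pi) * jaB z n := by
  rw [fourierCoeffOn_eq_integral]
  simp only [fourier_eval, zero_add, sub_zero, zero_sub]
  have cont : ∀ (m : ℤ), IntervalIntegrable (fun x : ℝ => Complex.exp (-(Complex.I * m * x)) * jaF z x) volume 0 Real.pi := by
    intro m
    apply Continuous.intervalIntegrable
    apply Continuous.mul
    · exact Complex.continuous_exp.comp (by continuity)
    · unfold jaF; continuity
  set g : ℝ → ℂ := fun x => Complex.exp (-(Complex.I * n * x)) * jaF z x with hg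
  have hgc : Continuous g := by
    apply Continuous.mul
    · exact Complex.continuous_exp.comp (by continuity)
    · unfold jaF; continuity
  have hint : ∀ a b : ℝ, IntervalIntegrable g volume a b := fun a b => hgc.intervalIntegrable a b
  have hsplit : (∫ x in (0:ℝ)..2*Real.pi, Complex.exp (-(Complex.I * n * x)) • jaF z x)
      = (∫ x in (0:ℝ)..Real.pi, g x) + ∫ x in Real.pi..2*Real.pi, g x := by
    rw [intervalIntegral.integral_add_adjacent_intervals (hint 0 Real.pi) (hint Real.pi (2*Real.pi))]
    simp only [smul_eq_mul]
    rfl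
  have hsub : (∫ x in Real.pi..2*Real.pi, g x)
      = ∫ x in (0:ℝ)..Real.pi, g (2*Real.pi - x) := by
    rw [intervalIntegral.integral_comp_sub_left g (2*Real.pi)]
    norm_num [two_mul]
  have hpt : ∀ x : ℝ, g (2*Real.pi - x) = -(Complex.exp (Complex.I * n * x) * jaF z x) := by
    intro x
    have e1 : Complex.exp (-(Complex.I * n * ((2*Real.pi - x : ℝ) : ℂ)))
        = Complex.exp (Complex.I * n * x) := by
      have : (-(Complex.I * n * ((2*Real.pi - x : ℝ) : ℂ)) : ℂ)
          = (-n : ℤ) * (2 * (Real.pi:ℂ) * Complex.I) + Complex.I * n * x := by push_cast; ring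
      rw [this, Complex.exp_add, Complex.exp_int_mul_two_pi_mul_I, one_mul]
    have e2 : jaF z (2*Real.pi - x) = -jaF z x := by
      unfold jaF
      have : Real.sin (2*Real.pi - x) = -Real.sin x := by
        rw [Real.sin_sub]; simp [Real.sin_two_pi, Real.cos_two_pi]
      rw [this]
      push_cast [mul_neg, Real.sin_neg]
      ring
    rw [hg]; simp only []
    rw [e1, e2]; ring
  have hcomb : (∫ x in (0:ℝ)..Real.pi, g x) + (∫ x in (0:ℝ)..Real.pi, g (2*Real.pi - x))
      = -2*Complex.I * (jaB z n : ℂ) := by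
    have : (fun x : ℝ => g (2*Real.pi - x)) = fun x : ℝ => -(Complex.exp (Complex.I * n * x) * jaF z x) := by
      ext x; exact hpt x
    rw [this]
    have hint2 : IntervalIntegrable (fun x : ℝ => -(Complex.exp (Complex.I * n * x) * jaF z x)) volume 0 Real.pi := by
      apply Continuous.intervalIntegrable
      apply Continuous.neg
      apply Continuous.mul
      · exact Complex.continuous_exp.comp (by continuity)
      · unfold jaF; continuity
    rw [← intervalIntegral.integral_add (hint 0 Real.pi) hint2]
    have : (fun x : ℝ => g x + -(Complex.exp (Complex.I * n * x) * jaF z x))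
        = fun x : ℝ => -2*Complex.I * ((Real.sin (n * x) * Real.sin (z * Real.sin x) : ℝ) : ℂ) := by
      ext x
      rw [hg]; simp only []
      have : Complex.exp (-(Complex.I * n * x)) * jaF z x - Complex.exp (Complex.I * n * x) * jaF z x
          = (Complex.exp (-(Complex.I * ((n:ℂ)*(x:ℂ)))) - Complex.exp (Complex.I * ((n:ℂ)*(x:ℂ)))) * jaF z x := by
        ring_nf
      push_cast
      rw [← sub_eq_add_neg, this, exp_diff]
      unfold jaF
      push_cast
      ring
    rw [this, intervalIntegral.integral_const_mul]
    congr 1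
    rw [intervalIntegral.integral_ofReal]
    rfl
  rw [hsplit, hsub, hcomb]
  have hpi : (Real.pi : ℂ) ≠ 0 := by exact_mod_cast Real.pi_ne_zero
  rw [Complex.real_smul]
  push_cast
  field_simp

noncomputable def jaF1 (z : ℝ) : ℝ → ℂ := fun φ => ((z * Real.cos φ * Real.cos (z * Real.sin φ) : ℝ) : ℂ)
noncomputable def jaF2 (z : ℝ) : ℝ → ℂ := fun φ =>
  ((-(z * Real.sin φ) * Real.cos (z * Real.sin φ) - (z * Real.cos φ)^2 * Real.sin (z * Real.sin φ) : ℝ) : ℂ)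


lemma hasDerivAt_jaF (z φ : ℝ) : HasDerivAt (jaF z) (jaF1 z φ) φ := by
  have h : HasDerivAt (fun x : ℝ => Real.sin (z * Real.sin x)) (z * Real.cos φ * Real.cos (z * Real.sin φ)) φ := by
    have := (Real.hasDerivAt_sin (z * Real.sin φ)).comp φ ((Real.hasDerivAt_sin φ).const_mul z)
    exact this.congr_deriv (by ring)
  exact h.ofReal_comp

lemma hasDerivAt_jaF1 (z φ : ℝ) : HasDerivAt (jaF1 z) (jaF2 z φ) φ := by
  have h : HasDerivAt (fun x : ℝ => z * Real.cos x * Real.cos (z * Real.sin x))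
      (-(z * Real.sin φ) * Real.cos (z * Real.sin φ) - (z * Real.cos φ)^2 * Real.sin (z * Real.sin φ)) φ := by
    have h1 : HasDerivAt (fun x : ℝ => z * Real.cos x) (z * (-Real.sin φ)) φ :=
      (Real.hasDerivAt_cos φ).const_mul z
    have h2 : HasDerivAt (fun x : ℝ => Real.cos (z * Real.sin x)) (-Real.sin (z * Real.sin φ) * (z * Real.cos φ)) φ :=
      by have := (Real.hasDerivAt_cos (z * Real.sin φ)).comp φ ((Real.hasDerivAt_sin φ).const_mul z); exact this
    have := h1.mul h2
    exact this.congr_deriv (by ring)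
  exact h.ofReal_comp

lemma jaF_cont (z : ℝ) : Continuous (jaF z) := by unfold jaF; continuity
lemma jaF1_cont (z : ℝ) : Continuous (jaF1 z) := by unfold jaF1; continuity
lemma jaF2_cont (z : ℝ) : Continuous (jaF2 z) := by unfold jaF2; continuity

lemma jaCoeff_decay (z : ℝ) (n : ℤ) (hn : n ≠ 0) :
    ‖fourierCoeffOn h2pi (jaF z) n‖ ≤ (|z| + z^2) / (n:ℝ)^2 := by
  have hb1 : jaF z (0 + 2*Real.pi) - jaF z 0 = 0 := by
    unfold jaF; norm_num [Real.sin_two_pi]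
  have hb2 : jaF1 z (0 + 2*Real.pi) - jaF1 z 0 = 0 := by
    unfold jaF1; norm_num [Real.sin_two_pi, Real.cos_two_pi]
  have e1 := fourierCoeffOn_of_hasDerivAt h2pi hn
      (fun x _ => hasDerivAt_jaF z x) ((jaF1_cont z).intervalIntegrable _ _)
  have e2 := fourierCoeffOn_of_hasDerivAt h2pi hn
      (fun x _ => hasDerivAt_jaF1 z x) ((jaF2_cont z).intervalIntegrable _ _)
  rw [hb1] at e1
  rw [hb2] at e2
  have hM : ‖fourierCoeffOn h2pi (jaF2 z) n‖ ≤ |z| + z^2 := by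
    rw [fourierCoeffOn_eq_integral]
    have hbound : ∀ x ∈ Set.uIcc (0:ℝ) (0 + 2*Real.pi),
        ‖fourier (-n) (x : AddCircle (0 + 2*Real.pi - 0)) • jaF2 z x‖ ≤ |z| + z^2 := by
      intro x _
      rw [norm_smul]
      have h1 : ‖fourier (-n) (x : AddCircle (0 + 2*Real.pi - 0))‖ = 1 := Circle.norm_coe _
      rw [h1, one_mul]
      unfold jaF2
      rw [Complex.norm_real]
      have b1 : |(-(z * Real.sin x) * Real.cos (z * Real.sin x))| ≤ |z| := by
        rw [abs_mul]
        have : |(-(z * Real.sin x))| ≤ |z| := by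
          rw [abs_neg, abs_mul]
          nlinarith [Real.abs_sin_le_one x, abs_nonneg z, Real.abs_sin_le_one x]
        nlinarith [Real.abs_cos_le_one (z * Real.sin x), abs_nonneg (-(z * Real.sin x) : ℝ), abs_nonneg (Real.cos (z*Real.sin x))]
      have b2 : |((z * Real.cos x)^2 * Real.sin (z * Real.sin x))| ≤ z^2 := by
        rw [abs_mul, abs_pow, abs_mul]
        have h3 : |z| * |Real.cos x| ≤ |z| := by
          nlinarith [Real.abs_cos_le_one x, abs_nonneg z]
        have h4 : (|z| * |Real.cos x|)^2 ≤ z^2 := by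
          nlinarith [abs_nonneg z, mul_nonneg (abs_nonneg z) (abs_nonneg (Real.cos x)), sq_abs z]
        nlinarith [Real.abs_sin_le_one (z * Real.sin x), pow_nonneg (mul_nonneg (abs_nonneg z) (abs_nonneg (Real.cos x))) 2]
      calc |(-(z * Real.sin x) * Real.cos (z * Real.sin x) - (z * Real.cos x)^2 * Real.sin (z * Real.sin x))|
          ≤ |(-(z * Real.sin x) * Real.cos (z * Real.sin x))| + |((z * Real.cos x)^2 * Real.sin (z * Real.sin x))| :=
            abs_sub _ _
        _ ≤ |z| + z^2 := add_le_add b1 b2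
    have key := intervalIntegral.norm_integral_le_of_norm_le_const (C := |z| + z^2) (fun x hx => by
      apply hbound
      rw [Set.uIoc_of_le (by positivity : (0:ℝ) ≤ 0 + 2*Real.pi)] at hx
      rw [Set.uIcc_of_le (by positivity : (0:ℝ) ≤ 0 + 2*Real.pi)]
      exact Set.mem_Icc_of_Ioc hx)
    rw [norm_smul]
    rw [show ((1:ℝ)/(0 + 2*Real.pi - 0)) = 1/(2*Real.pi) by norm_num]
    rw [Real.norm_eq_abs, abs_of_pos (by positivity : (0:ℝ) < 1/(2*Real.pi))]
    calc 1/(2*Real.pi) * ‖∫ x in (0:ℝ)..(0+2*Real.pi), fourier (-n) (x : AddCircle (0 + 2*Real.pi - 0)) • jaF2 z x‖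
        ≤ 1/(2*Real.pi) * ((|z| + z^2) * |0 + 2*Real.pi - 0|) := by
          apply mul_le_mul_of_nonneg_left (key) (by positivity)
      _ = |z| + z^2 := by
          rw [abs_of_pos (by have := Real.pi_pos; nlinarith : (0:ℝ) < 0 + 2*Real.pi - 0)]
          have := Real.pi_pos
          field_simp
          ring
  rw [e1, e2]
  have hn2 : ((n:ℝ))^2 > 0 := by positivity
  have hnC : ((n:ℂ)) ≠ 0 := Int.cast_ne_zero.mpr hn
  have hpiC : ((Real.pi:ℂ)) ≠ 0 := by exact_mod_cast Real.pi_ne_zero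
  simp only [mul_zero, zero_sub, norm_neg, norm_mul, norm_div, norm_one]
  have hT : ‖((0 + 2*Real.pi : ℝ) : ℂ) - ((0:ℝ):ℂ)‖ = 2*Real.pi := by
    have : ((0 + 2*Real.pi : ℝ) : ℂ) - ((0:ℝ):ℂ) = ((2*Real.pi : ℝ) : ℂ) := by push_cast; ring
    rw [this, Complex.norm_real, Real.norm_eq_abs, abs_of_pos (by positivity)]
  have h2 : ‖(2:ℂ)‖ = 2 := by norm_num
  have hI : ‖Complex.I‖ = 1 := Complex.norm_I
  have hNn : ‖((n:ℤ):ℂ)‖ = |(n:ℝ)| := by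
    rw [show ((n:ℤ):ℂ) = (((n:ℝ)):ℂ) by push_cast; ring, Complex.norm_real, Real.norm_eq_abs]
  have hPi : ‖((Real.pi:ℝ):ℂ)‖ = Real.pi := by
    rw [Complex.norm_real, Real.norm_eq_abs, abs_of_pos Real.pi_pos]
  rw [hT, h2, hI, hNn, hPi]
  have hnabs : (0:ℝ) < |(n:ℝ)| := by
    rw [abs_pos]; exact_mod_cast hn
  have hsq : |(n:ℝ)| * |(n:ℝ)| = (n:ℝ)^2 := by
    rw [← abs_mul, abs_mul_self]; ring
  have gen : ∀ (A m : ℝ), 0 < m → 1/(2*Real.pi*1*m) * (2*Real.pi * (1/(2*Real.pi*1*m) * (2*Real.pi*A))) = A/(m*m) := by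
    intro A m hm
    have := Real.pi_pos
    field_simp
  rw [gen _ _ hnabs, hsq]
  gcongr

lemma fourier_eval2 (n : ℤ) (x : ℝ) :
    (fourier n (x : AddCircle (2*Real.pi))) = Complex.exp (Complex.I * n * x) := by
  rw [fourier_coe_apply]
  congr 1
  have hpi : (Real.pi : ℂ) ≠ 0 := by exact_mod_cast Real.pi_ne_zero
  push_cast
  field_simp

lemma jaB_zero (z : ℝ) : jaB z 0 = 0 := by
  unfold jaB; simp

lemma jaB_neg (z ν : ℝ) : jaB z (-ν) = -jaB z ν := by
  unfold jaB
  rw [← intervalIntegral.integral_neg]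
  congr 1
  ext φ
  rw [neg_mul, Real.sin_neg]
  ring

lemma ja_main_Ico (z θ : ℝ) (hθ : θ ∈ Set.Ico (0:ℝ) (2*Real.pi)) :
    HasSum (fun k : ℕ => besselJ (2 * (k : ℤ) + 1) z * Real.sin ((2 * (k : ℝ) + 1) * θ))
      (Real.sin (z * Real.sin θ) / 2) := by
  haveI hfact : Fact (0 < 2*Real.pi) := ⟨by positivity⟩
  have hends : jaF z 0 = jaF z (0 + 2*Real.pi) := by
    unfold jaF; norm_num [Real.sin_two_pi]
  set G : C(AddCircle (2*Real.pi), ℂ) :=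
    ⟨AddCircle.liftIco (2*Real.pi) 0 (jaF z),
      AddCircle.liftIco_continuous hends ((jaF_cont z).continuousOn)⟩ with hG
  have hcoeff : ∀ n : ℤ, fourierCoeff (⇑G) n = -(Complex.I/Real.pi) * jaB z n := by
    intro n
    have h1 : fourierCoeff (⇑G) n = fourierCoeffOn h2pi (jaF z) n := by
      exact fourierCoeff_liftIco_eq (jaF z) n
    rw [h1, jaC]
  have hsum : Summable (fourierCoeff (⇑G)) := by
    apply Summable.of_norm_bounded_eventually (g := fun n : ℤ => (|z| + z^2) * (1/(n:ℝ)^2))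
    · exact (Real.summable_one_div_int_pow.mpr one_lt_two).mul_left _
    · rw [Filter.eventually_cofinite]
      apply Set.Finite.subset (Set.finite_singleton (0:ℤ))
      intro n hn
      simp only [Set.mem_setOf_eq, not_le] at hn
      by_contra h0
      simp only [Set.mem_singleton_iff] at h0
      have := jaCoeff_decay z n h0
      rw [← fourierCoeff_liftIco_eq (jaF z) n] at this
      rw [mul_one_div] at hn
      exact absurd this (not_le.mpr hn)
  have hps := has_pointwise_sum_fourier_series_of_summable hsum (θ : AddCircle (2*Real.pi))
  have hGθ : G ((θ : ℝ) : AddCircle (2*Real.pi)) = jaF z θ := by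
    show AddCircle.liftIco (2*Real.pi) 0 (jaF z) ((θ : ℝ) : AddCircle (2*Real.pi)) = jaF z θ
    exact AddCircle.liftIco_coe_apply (show θ ∈ Set.Ico (0:ℝ) (0 + 2*Real.pi) by rwa [zero_add])
  rw [hGθ] at hps
  have h2 := hps.nat_add_neg
  have hT0 : fourierCoeff (⇑G) 0 • fourier 0 ((θ:ℝ) : AddCircle (2*Real.pi)) = 0 := by
    rw [hcoeff 0]
    simp [jaB_zero]
  rw [hT0, add_zero] at h2
  have hterm : ∀ n : ℕ,
      (fourierCoeff (⇑G) n • fourier (n:ℤ) ((θ:ℝ) : AddCircle (2*Real.pi))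
        + fourierCoeff (⇑G) (-(n:ℤ)) • fourier (-(n:ℤ)) ((θ:ℝ) : AddCircle (2*Real.pi)))
      = (((2/Real.pi) * jaB z n * Real.sin (n*θ) : ℝ) : ℂ) := by
    intro n
    rw [hcoeff, hcoeff, smul_eq_mul, smul_eq_mul, fourier_eval2, fourier_eval2]
    have hBneg : jaB z ((-(n:ℤ) : ℤ) : ℝ) = -jaB z n := by
      push_cast
      rw [jaB_neg]
    rw [hBneg]
    have hw : Complex.I * ((-(n:ℤ) : ℤ) : ℂ) * θ = -(Complex.I * ((n:ℝ)*θ : ℝ)) := by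
      push_cast; ring
    rw [hw]
    have hw2 : Complex.I * ((n:ℤ) : ℂ) * θ = Complex.I * ((n:ℝ)*θ : ℝ) := by
      push_cast; ring
    rw [hw2]
    have hpi : (Real.pi : ℂ) ≠ 0 := by exact_mod_cast Real.pi_ne_zero
    have expand : -(Complex.I/Real.pi) * (jaB z n : ℂ) * Complex.exp (Complex.I * ((n:ℝ)*θ : ℝ))
        + -(Complex.I/Real.pi) * (-(jaB z n : ℂ)) * Complex.exp (-(Complex.I * ((n:ℝ)*θ : ℝ)))
        = (Complex.I/Real.pi) * (jaB z n : ℂ) *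
          (Complex.exp (-(Complex.I * ((n:ℝ)*θ : ℝ))) - Complex.exp (Complex.I * ((n:ℝ)*θ : ℝ))) := by
      ring
    push_cast
    push_cast at expand
    rw [expand, exp_diff ((n:ℂ)*(θ:ℂ))]
    field_simp
    linear_combination (-((jaB z (n:ℝ) : ℂ) * Complex.sin ((n:ℂ) * (θ:ℂ)))) * Complex.I_mul_I

  have h3 : HasSum (fun n : ℕ => (((2/Real.pi) * jaB z n * Real.sin (n*θ) : ℝ) : ℂ))
      ((Real.sin (z * Real.sin θ) : ℝ) : ℂ) := by
    have : (fun n : ℕ =>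
        fourierCoeff (⇑G) n • fourier (n:ℤ) ((θ:ℝ) : AddCircle (2*Real.pi))
        + fourierCoeff (⇑G) (-(n:ℤ)) • fourier (-(n:ℤ)) ((θ:ℝ) : AddCircle (2*Real.pi)))
        = fun n : ℕ => (((2/Real.pi) * jaB z n * Real.sin (n*θ) : ℝ) : ℂ) := by
      ext n; exact hterm n
    rw [this] at h2
    exact h2
  have h4 : HasSum (fun n : ℕ => (2/Real.pi) * jaB z n * Real.sin (n*θ))
      (Real.sin (z * Real.sin θ)) := Complex.hasSum_ofReal.mp h3
  have hinj : Function.Injective (fun k : ℕ => 2*k+1) := by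
    intro a b h; dsimp at h; omega
  have h5 : HasSum (fun k : ℕ => (2/Real.pi) * jaB z ((2*k+1 : ℕ) : ℝ) * Real.sin (((2*k+1 : ℕ):ℝ)*θ))
      (Real.sin (z * Real.sin θ)) := by
    apply (Function.Injective.hasSum_iff hinj ?_).mpr h4
    intro m hm
    have : Even m := by
      rcases Nat.even_or_odd m with he | ho
      · exact he
      · exfalso; apply hm; obtain ⟨k, hk⟩ := ho; exact ⟨k, hk.symm⟩
    obtain ⟨k, hk⟩ := this
    have : ((m:ℕ):ℝ) = 2*(k:ℝ) := by rw [hk]; push_cast; ring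
    rw [this, jaB_even z k]
    ring
  have h6 : HasSum (fun k : ℕ => besselJ (2 * (k : ℤ) + 1) z * Real.sin ((2 * (k : ℝ) + 1) * θ))
      (Real.sin (z * Real.sin θ) / 2) := by
    have heq : (fun k : ℕ => (2/Real.pi) * jaB z ((2*k+1 : ℕ) : ℝ) * Real.sin (((2*k+1 : ℕ):ℝ)*θ))
        = fun k : ℕ => 2 * (besselJ (2 * (k : ℤ) + 1) z * Real.sin ((2 * (k : ℝ) + 1) * θ)) := by
      ext k
      rw [besselJ_odd z k]
      have : ((2*k+1 : ℕ) : ℝ) = 2*(k:ℝ)+1 := by push_cast; ring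
      rw [this]
      field_simp
    rw [heq] at h5
    have := h5.div_const 2
    simpa [mul_div_assoc, mul_comm, mul_div_cancel_left₀] using this
  exact h6

end JacobiAngerAux

/-- The Jacobi–Anger-type expansion: for all real `z` and `θ`, the series
`Σ_{k=0}^∞ J_{2k+1}(z) sin((2k+1)θ)` converges and
`sin(z sin θ) = 2 Σ_{k=0}^∞ J_{2k+1}(z) sin((2k+1)θ)`. -/
theorem sin_sin_eq_tsum_besselJ (z θ : ℝ) :
    HasSum (fun k : ℕ => besselJ (2 * (k : ℤ) + 1) z * Real.sin ((2 * (k : ℝ) + 1) * θ))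
      (Real.sin (z * Real.sin θ) / 2) := by
  have h2pi' : (0:ℝ) < 2*Real.pi := by positivity
  set m : ℤ := ⌊θ / (2*Real.pi)⌋ with hm
  set θ₀ : ℝ := θ - m * (2*Real.pi) with hθ₀
  have hmem : θ₀ ∈ Set.Ico (0:ℝ) (2*Real.pi) :=
    ⟨Int.sub_floor_div_mul_nonneg θ h2pi', Int.sub_floor_div_mul_lt θ h2pi'⟩
  have h := ja_main_Ico z θ₀ hmem
  have hsin : Real.sin θ₀ = Real.sin θ := by
    have : θ₀ = θ + ((-m : ℤ) : ℝ) * (2*Real.pi) := by push_cast; ring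
    rw [this, Real.sin_add_int_mul_two_pi]
  have hterm : ∀ k : ℕ, Real.sin ((2*(k:ℝ)+1) * θ₀) = Real.sin ((2*(k:ℝ)+1)*θ) := by
    intro k
    have : (2*(k:ℝ)+1) * θ₀ = (2*(k:ℝ)+1)*θ + ((2*(k:ℤ)+1) * (-m) : ℤ) * (2*Real.pi) := by
      push_cast; ring
    rw [this, Real.sin_add_int_mul_two_pi]
  simp only [hsin, hterm] at h
  exact h
end

section
/- For every natural number k ≥ 1 and every real t with 0 < t < 1: lim_{N → ∞} Σ_{j=1}^{N−1} ( J_{2j−1}(2Nt) + J_{2j+1}(2Nt) ) · sin(k j / N) = sin(k t). -/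
set_option maxHeartbeats 1000000

open Real MeasureTheory Filter Finset

lemma besselJ_decay {m : ℤ} {x : ℝ} (hx : 0 ≤ x) (hm : x < (m:ℝ)) :
    |besselJ m x| ≤ x / ((m:ℝ) - x)^3 + 3 * x^2 / ((m:ℝ) - x)^4 := by
  set c : ℝ := (m:ℝ) with hc
  have hd : 0 < c - x := by linarith
  set p : ℝ → ℝ := fun θ => c - x * Real.cos θ with hpdef
  have hple : ∀ θ, c - x ≤ p θ := by
    intro θ
    have := Real.cos_le_one θ
    have : x * Real.cos θ ≤ x := by nlinarith
    simp only [hpdef]; linarith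
  have hppos : ∀ θ, 0 < p θ := fun θ => lt_of_lt_of_le hd (hple θ)
  set φ : ℝ → ℝ := fun θ => c * θ - x * Real.sin θ with hphidef
  set Ψ : ℝ → ℝ := fun θ =>
    Real.sin (φ θ) / p θ - Real.cos (φ θ) * (x * Real.sin θ) / (p θ)^3 with hPsidef
  set r : ℝ → ℝ := fun θ =>
    Real.cos (φ θ) * (x * Real.cos θ / (p θ)^3 - 3 * x^2 * (Real.sin θ)^2 / (p θ)^4) with hrdef
  have hderiv : ∀ θ, HasDerivAt Ψ (Real.cos (φ θ) - r θ) θ := by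
    intro θ
    have hφ : HasDerivAt φ (p θ) θ := by
      have h1 : HasDerivAt (fun θ : ℝ => c * θ) c θ := by
        simpa using (hasDerivAt_id θ).const_mul c
      have h2 : HasDerivAt (fun θ : ℝ => x * Real.sin θ) (x * Real.cos θ) θ :=
        (Real.hasDerivAt_sin θ).const_mul x
      exact h1.sub h2
    have hp' : HasDerivAt p (x * Real.sin θ) θ := by
      have h2 : HasDerivAt (fun θ : ℝ => x * Real.cos θ) (x * (-Real.sin θ)) θ :=
        (Real.hasDerivAt_cos θ).const_mul x
      have h3 := (hasDerivAt_const θ c).sub h2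
      simp only [zero_sub, mul_neg, neg_neg] at h3
      exact h3
    have hsinφ : HasDerivAt (fun θ => Real.sin (φ θ)) (Real.cos (φ θ) * p θ) θ :=
      (Real.hasDerivAt_sin (φ θ)).comp θ hφ
    have hcosφ : HasDerivAt (fun θ => Real.cos (φ θ)) (-Real.sin (φ θ) * p θ) θ :=
      (Real.hasDerivAt_cos (φ θ)).comp θ hφ
    have hxs : HasDerivAt (fun θ : ℝ => x * Real.sin θ) (x * Real.cos θ) θ :=
      (Real.hasDerivAt_sin θ).const_mul x
    have hnum : HasDerivAt (fun θ => Real.cos (φ θ) * (x * Real.sin θ))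
        (-Real.sin (φ θ) * p θ * (x * Real.sin θ) + Real.cos (φ θ) * (x * Real.cos θ)) θ :=
      hcosφ.mul hxs
    have hp3 : HasDerivAt (fun θ => (p θ)^3) (3 * (p θ)^2 * (x * Real.sin θ)) θ := by
      have h := hp'.pow 3
      norm_num at h
      exact h
    have h1 : HasDerivAt (fun θ => Real.sin (φ θ) / p θ)
        ((Real.cos (φ θ) * p θ * p θ - Real.sin (φ θ) * (x * Real.sin θ)) / (p θ)^2) θ :=
      hsinφ.div hp' (hppos θ).ne'
    have h2 : HasDerivAt (fun θ => Real.cos (φ θ) * (x * Real.sin θ) / (p θ)^3)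
        (((-Real.sin (φ θ) * p θ * (x * Real.sin θ) + Real.cos (φ θ) * (x * Real.cos θ)) * (p θ)^3
          - Real.cos (φ θ) * (x * Real.sin θ) * (3 * (p θ)^2 * (x * Real.sin θ))) / ((p θ)^3)^2) θ :=
      hnum.div hp3 (pow_ne_zero 3 (hppos θ).ne')
    have := h1.sub h2
    refine this.congr_deriv ?_
    have hpne : p θ ≠ 0 := (hppos θ).ne'
    simp only [hrdef]
    field_simp
    ring
  have hcont_p : Continuous p := by
    simp only [hpdef]; continuity
  have hcont_φ : Continuous φ := by
    simp only [hphidef]; continuity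
  have hcont_r : Continuous r := by
    apply ((Real.continuous_cos.comp hcont_φ).mul _)
    apply Continuous.sub
    · exact (continuous_const.mul Real.continuous_cos).div (hcont_p.pow 3)
        (fun θ => pow_ne_zero 3 (hppos θ).ne')
    · exact (continuous_const.mul (Real.continuous_sin.pow 2)).div (hcont_p.pow 4)
        (fun θ => pow_ne_zero 4 (hppos θ).ne')
  have hint : ∫ θ in (0:ℝ)..Real.pi, (Real.cos (φ θ) - r θ) = Ψ Real.pi - Ψ 0 :=
    intervalIntegral.integral_eq_sub_of_hasDerivAt (fun θ _ => hderiv θ)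
      (((Real.continuous_cos.comp hcont_φ).sub hcont_r).intervalIntegrable 0 Real.pi)
  have hΨ0 : Ψ 0 = 0 := by
    simp [hPsidef, hphidef]
  have hΨπ : Ψ Real.pi = 0 := by
    have h1 : φ Real.pi = (m:ℝ) * Real.pi := by simp [hphidef, Real.sin_pi, hc]
    simp [hPsidef, h1, Real.sin_int_mul_pi, Real.sin_pi]
  have hsplit : ∫ θ in (0:ℝ)..Real.pi, Real.cos (φ θ) = ∫ θ in (0:ℝ)..Real.pi, r θ := by
    have hi1 : IntervalIntegrable (fun θ => Real.cos (φ θ)) volume 0 Real.pi :=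
      (Real.continuous_cos.comp hcont_φ).intervalIntegrable 0 Real.pi
    have hi2 : IntervalIntegrable r volume 0 Real.pi := hcont_r.intervalIntegrable 0 Real.pi
    have := intervalIntegral.integral_sub hi1 hi2
    rw [hint, hΨ0, hΨπ] at this
    linarith [this]
  have hrbound : ∀ θ ∈ Set.uIoc (0:ℝ) Real.pi, ‖r θ‖ ≤ x / (c - x)^3 + 3 * x^2 / (c - x)^4 := by
    intro θ _
    have hp3 : (c - x)^3 ≤ (p θ)^3 := pow_le_pow_left₀ hd.le (hple θ) 3
    have hp4 : (c - x)^4 ≤ (p θ)^4 := pow_le_pow_left₀ hd.le (hple θ) 4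
    have hd3 : (0:ℝ) < (c - x)^3 := pow_pos hd 3
    have hd4 : (0:ℝ) < (c - x)^4 := pow_pos hd 4
    have hb1 : |x * Real.cos θ / (p θ)^3| ≤ x / (c - x)^3 := by
      rw [abs_div]
      rw [abs_of_pos (pow_pos (hppos θ) 3)]
      apply div_le_div₀ (by positivity) _ hd3 hp3
      rw [abs_mul, abs_of_nonneg hx]
      nlinarith [abs_cos_le_one θ, abs_nonneg (Real.cos θ)]
    have hb2 : |3 * x^2 * (Real.sin θ)^2 / (p θ)^4| ≤ 3 * x^2 / (c - x)^4 := by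
      rw [abs_div, abs_of_pos (pow_pos (hppos θ) 4)]
      apply div_le_div₀ (by positivity) _ hd4 hp4
      rw [abs_mul]
      have : |Real.sin θ ^ 2| ≤ 1 := by
        rw [abs_of_nonneg (sq_nonneg _)]
        nlinarith [abs_sin_le_one θ, abs_nonneg (Real.sin θ), sq_abs (Real.sin θ)]
      nlinarith [abs_nonneg (3 * x^2 * 1), abs_of_nonneg (by positivity : (0:ℝ) ≤ 3 * x^2)]
    calc ‖r θ‖ = |Real.cos (φ θ)| * |x * Real.cos θ / (p θ)^3 - 3 * x^2 * (Real.sin θ)^2 / (p θ)^4| := by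
          simp only [hrdef, Real.norm_eq_abs, abs_mul]
      _ ≤ 1 * (|x * Real.cos θ / (p θ)^3| + |3 * x^2 * (Real.sin θ)^2 / (p θ)^4|) := by
          apply mul_le_mul (abs_cos_le_one _) (abs_sub _ _) (abs_nonneg _) zero_le_one
      _ ≤ x / (c - x)^3 + 3 * x^2 / (c - x)^4 := by
          rw [one_mul]; exact add_le_add hb1 hb2
  have hnorm : |∫ θ in (0:ℝ)..Real.pi, r θ| ≤ (x / (c - x)^3 + 3 * x^2 / (c - x)^4) * |Real.pi - 0| := by
    exact intervalIntegral.norm_integral_le_of_norm_le_const hrbound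
  have hπ : |Real.pi - 0| = Real.pi := by
    rw [sub_zero, abs_of_pos Real.pi_pos]
  rw [besselJ]
  have : (fun θ => Real.cos ((m:ℝ) * θ - x * Real.sin θ)) = fun θ => Real.cos (φ θ) := rfl
  rw [abs_mul, abs_of_pos (by positivity : (0:ℝ) < 1/Real.pi)]
  calc 1/Real.pi * |∫ θ in (0:ℝ)..Real.pi, Real.cos ((m:ℝ) * θ - x * Real.sin θ)|
      = 1/Real.pi * |∫ θ in (0:ℝ)..Real.pi, r θ| := by rw [this, hsplit]
    _ ≤ 1/Real.pi * ((x / (c - x)^3 + 3 * x^2 / (c - x)^4) * Real.pi) := by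
        rw [hπ] at hnorm
        apply mul_le_mul_of_nonneg_left hnorm (by positivity)
    _ = x / (c - x)^3 + 3 * x^2 / (c - x)^4 := by
        field_simp


/-- auxiliary sine coefficient -/
noncomputable def bcoef (x : ℝ) (n : ℤ) : ℝ :=
  (1 / Real.pi) * ∫ θ in (0:ℝ)..Real.pi, Real.sin (x * Real.sin θ) * Real.sin (n * θ)

lemma cos_int_mul_pi_odd {m : ℤ} (hm : Odd m) : Real.cos ((m:ℝ) * Real.pi) = -1 := by
  obtain ⟨l, hl⟩ := hm
  subst hl
  push_cast
  rw [add_mul, one_mul, Real.cos_add]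
  rw [show (2:ℝ) * (l:ℝ) * Real.pi = (l:ℝ) * (2 * Real.pi) by ring]
  rw [Real.cos_int_mul_two_pi]
  simp [Real.sin_pi]

/-- reflection: ∫₀^π f(π-θ) = ∫₀^π f -/
lemma integral_reflect (f : ℝ → ℝ) :
    ∫ θ in (0:ℝ)..Real.pi, f (Real.pi - θ) = ∫ θ in (0:ℝ)..Real.pi, f θ := by
  simpa using intervalIntegral.integral_comp_sub_left f Real.pi

lemma integral_cos_cos_odd {m : ℤ} (hm : Odd m) (x : ℝ) :
    ∫ θ in (0:ℝ)..Real.pi, Real.cos ((m:ℝ) * θ) * Real.cos (x * Real.sin θ) = 0 := by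
  set f : ℝ → ℝ := fun θ => Real.cos ((m:ℝ) * θ) * Real.cos (x * Real.sin θ) with hf
  have key : ∀ θ, f (Real.pi - θ) = -f θ := by
    intro θ
    simp only [hf]
    rw [Real.sin_pi_sub, mul_sub, Real.cos_sub, cos_int_mul_pi_odd hm, Real.sin_int_mul_pi]
    ring
  have h := integral_reflect f
  rw [show (fun θ => f (Real.pi - θ)) = fun θ => -f θ from funext key] at h
  rw [intervalIntegral.integral_neg] at h
  linarith

lemma integral_sin_sin_even {n : ℤ} (hn : Even n) (x : ℝ) :
    ∫ θ in (0:ℝ)..Real.pi, Real.sin (x * Real.sin θ) * Real.sin ((n:ℝ) * θ) = 0 := by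
  set f : ℝ → ℝ := fun θ => Real.sin (x * Real.sin θ) * Real.sin ((n:ℝ) * θ) with hf
  have hcos : Real.cos ((n:ℝ) * Real.pi) = 1 := by
    obtain ⟨l, hl⟩ := hn
    subst hl
    push_cast
    rw [show ((l:ℝ) + l) * Real.pi = (l:ℝ) * (2 * Real.pi) by ring]
    exact_mod_cast Real.cos_int_mul_two_pi l
  have key : ∀ θ, f (Real.pi - θ) = -f θ := by
    intro θ
    simp only [hf]
    rw [Real.sin_pi_sub, mul_sub, Real.sin_sub, hcos, Real.sin_int_mul_pi]
    ring
  have h := integral_reflect f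
  rw [show (fun θ => f (Real.pi - θ)) = fun θ => -f θ from funext key] at h
  rw [intervalIntegral.integral_neg] at h
  linarith

lemma bcoef_even {n : ℤ} (hn : Even n) (x : ℝ) : bcoef x n = 0 := by
  rw [bcoef, integral_sin_sin_even hn, mul_zero]

lemma bcoef_neg (x : ℝ) (n : ℤ) : bcoef x (-n) = -bcoef x n := by
  rw [bcoef, bcoef]
  rw [show -(1/Real.pi * ∫ θ in (0:ℝ)..Real.pi, Real.sin (x * Real.sin θ) * Real.sin ((n:ℝ) * θ))
      = 1/Real.pi * ∫ θ in (0:ℝ)..Real.pi, -(Real.sin (x * Real.sin θ) * Real.sin ((n:ℝ) * θ))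
    from by rw [intervalIntegral.integral_neg]; ring]
  congr 1
  apply intervalIntegral.integral_congr
  intro θ _
  push_cast
  rw [neg_mul, Real.sin_neg]
  ring

lemma bcoef_odd {m : ℤ} (hm : Odd m) (x : ℝ) : besselJ m x = bcoef x m := by
  rw [besselJ, bcoef]
  congr 1
  have hsplit : ∀ θ : ℝ, Real.cos ((m:ℝ) * θ - x * Real.sin θ)
      = Real.cos ((m:ℝ) * θ) * Real.cos (x * Real.sin θ)
        + Real.sin (x * Real.sin θ) * Real.sin ((m:ℝ) * θ) := by
    intro θ
    rw [Real.cos_sub]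
    ring
  rw [intervalIntegral.integral_congr (g := fun θ => Real.cos ((m:ℝ) * θ) * Real.cos (x * Real.sin θ)
        + Real.sin (x * Real.sin θ) * Real.sin ((m:ℝ) * θ)) (fun θ _ => hsplit θ)]
  rw [intervalIntegral.integral_add]
  · rw [integral_cos_cos_odd hm, zero_add]
  · exact (((Real.continuous_cos.comp (continuous_const.mul continuous_id))).mul
      (Real.continuous_cos.comp (continuous_const.mul Real.continuous_sin))).intervalIntegrable 0 Real.pi
  · exact ((Real.continuous_sin.comp (continuous_const.mul Real.continuous_sin)).mul
      (Real.continuous_sin.comp (continuous_const.mul continuous_id))).intervalIntegrable 0 Real.pi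

lemma abs_bcoef_le_one (x : ℝ) (n : ℤ) : |bcoef x n| ≤ 1 := by
  rw [bcoef, abs_mul, abs_of_pos (by positivity : (0:ℝ) < 1/Real.pi)]
  have h : ∀ θ ∈ Set.uIoc (0:ℝ) Real.pi, ‖Real.sin (x * Real.sin θ) * Real.sin ((n:ℝ) * θ)‖ ≤ 1 := by
    intro θ _
    rw [Real.norm_eq_abs, abs_mul]
    exact mul_le_one₀ (abs_sin_le_one _) (abs_nonneg _) (abs_sin_le_one _)
  have := intervalIntegral.norm_integral_le_of_norm_le_const h
  rw [sub_zero, abs_of_pos Real.pi_pos, one_mul] at this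
  calc 1/Real.pi * |∫ θ in (0:ℝ)..Real.pi, Real.sin (x * Real.sin θ) * Real.sin ((n:ℝ) * θ)|
      ≤ 1/Real.pi * Real.pi := by
        apply mul_le_mul_of_nonneg_left this (by positivity)
    _ = 1 := by field_simp


section FourierPart
variable (x : ℝ)

/-- the function sin(x sin β), as a complex valued function -/
noncomputable def gfun (x : ℝ) : ℝ → ℂ := fun β => ((Real.sin (x * Real.sin β) : ℝ) : ℂ)

lemma gfun_periodic : Function.Periodic (gfun x) (2 * Real.pi) := by
  intro β
  simp [gfun, Real.sin_add_two_pi]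

noncomputable def Fmap (x : ℝ) : C(AddCircle (2 * Real.pi), ℂ) :=
  ⟨(gfun_periodic x).lift, by
    have : Continuous ((gfun_periodic x).lift ∘ (QuotientAddGroup.mk : ℝ → AddCircle (2*Real.pi))) := by
      have : ((gfun_periodic x).lift ∘ (QuotientAddGroup.mk : ℝ → AddCircle (2*Real.pi))) = gfun x := by
        funext β; exact (gfun_periodic x).lift_coe β
      rw [this]
      unfold gfun
      continuity
    exact continuous_coinduced_dom.mpr this⟩

lemma Fmap_coe (β : ℝ) : Fmap x (β : AddCircle (2*Real.pi)) = gfun x β :=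
  (gfun_periodic x).lift_coe β

end FourierPart

lemma fourierCoeff_Fmap (x : ℝ) (n : ℤ) :
    haveI : Fact (0 < 2 * Real.pi) := ⟨by positivity⟩
    fourierCoeff (⇑(Fmap x)) n = -Complex.I * (bcoef x n : ℝ) := by
  haveI : Fact (0 < 2 * Real.pi) := ⟨by positivity⟩
  rw [fourierCoeff_eq_intervalIntegral (⇑(Fmap x)) n (-Real.pi)]
  have hlim : -Real.pi + 2 * Real.pi = Real.pi := by ring
  rw [hlim]
  set f1 : ℝ → ℂ := fun β => Complex.exp (-((n:ℝ) * β : ℝ) * Complex.I) * gfun x β with hf1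
  have hkey : ∀ β : ℝ, (fourier (-n) (β : AddCircle (2*Real.pi)) : ℂ) • Fmap x (β : AddCircle (2*Real.pi)) = f1 β := by
    intro β
    rw [Fmap_coe, fourier_coe_apply, smul_eq_mul, hf1]
    congr 2
    have hπ : (Real.pi : ℂ) ≠ 0 := Complex.ofReal_ne_zero.mpr Real.pi_ne_zero
    push_cast
    field_simp
  rw [intervalIntegral.integral_congr (g := f1) (fun β _ => hkey β)]
  have hcont : Continuous f1 := by
    apply Continuous.mul
    · apply Complex.continuous_exp.comp
      apply Continuous.mul _ continuous_const
      continuity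
    · unfold gfun; continuity
  have hsplit : ∫ β in (-Real.pi)..Real.pi, f1 β
      = (∫ β in (-Real.pi)..(0:ℝ), f1 β) + ∫ β in (0:ℝ)..Real.pi, f1 β := by
    rw [intervalIntegral.integral_add_adjacent_intervals
      (hcont.intervalIntegrable _ _) (hcont.intervalIntegrable _ _)]
  have hneg : ∫ β in (-Real.pi)..(0:ℝ), f1 β = ∫ β in (0:ℝ)..Real.pi, f1 (-β) := by
    rw [intervalIntegral.integral_comp_neg f1]
    norm_num
  have hf1neg : ∀ β : ℝ, f1 (-β) = -(Complex.exp (((n:ℝ) * β : ℝ) * Complex.I) * gfun x β) := by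
    intro β
    simp only [hf1, gfun, Real.sin_neg, mul_neg, neg_neg]
    push_cast
    ring_nf
  have hcomb : ∀ β : ℝ, f1 β + f1 (-β)
      = -2 * Complex.I * ((Real.sin (x * Real.sin β) * Real.sin ((n:ℝ) * β) : ℝ) : ℂ) := by
    intro β
    rw [hf1neg β]
    simp only [hf1, gfun]
    rw [Complex.exp_mul_I, Complex.exp_mul_I, Complex.cos_neg, Complex.sin_neg]
    push_cast
    ring
  have : ∫ β in (-Real.pi)..Real.pi, f1 β
      = ∫ β in (0:ℝ)..Real.pi, (-2 * Complex.I * ((Real.sin (x * Real.sin β) * Real.sin ((n:ℝ) * β) : ℝ) : ℂ)) := by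
    have hcn : Continuous fun β : ℝ => f1 (-β) := hcont.comp continuous_neg
    rw [hsplit, hneg, ← intervalIntegral.integral_add (hcn.intervalIntegrable _ _)
        (hcont.intervalIntegrable _ _)]
    apply intervalIntegral.integral_congr
    intro β _
    have := hcomb β
    rw [add_comm] at this
    exact this
  rw [this, intervalIntegral.integral_const_mul]
  rw [intervalIntegral.integral_ofReal]
  have hb : (∫ β in (0:ℝ)..Real.pi, Real.sin (x * Real.sin β) * Real.sin ((n:ℝ) * β)) = Real.pi * bcoef x n := by
    rw [bcoef]
    field_simp
  rw [hb]
  have hπ : (Real.pi : ℂ) ≠ 0 := Complex.ofReal_ne_zero.mpr Real.pi_ne_zero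
  rw [Complex.real_smul]
  push_cast
  field_simp


lemma bcoef_nat_bound {x : ℝ} (hx : 0 ≤ x) (n : ℕ) (hn : x < (n:ℝ)) :
    |bcoef x (n:ℤ)| ≤ x / ((n:ℝ) - x)^3 + 3 * x^2 / ((n:ℝ) - x)^4 := by
  rcases Int.even_or_odd (n:ℤ) with he | ho
  · rw [bcoef_even he]
    simp only [abs_zero]
    have : (0:ℝ) < (n:ℝ) - x := by linarith
    positivity
  · rw [← bcoef_odd ho]
    exact_mod_cast besselJ_decay hx (by exact_mod_cast hn)

lemma bcoef_abs_summable {x : ℝ} (hx : 0 ≤ x) : Summable (fun n : ℕ => |bcoef x (n:ℤ)|) := by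
  set K : ℕ := ⌈x⌉₊ + 1 with hK
  rw [← summable_nat_add_iff K]
  have hxK : x + 1 ≤ (⌈x⌉₊:ℝ) + 1 := by
    have := Nat.le_ceil x
    linarith
  have hmaj : ∀ n : ℕ, |bcoef x ((n + K : ℕ) : ℤ)| ≤ (x + 3 * x^2) * (1 / ((n:ℝ)+1)^3) := by
    intro n
    have hlt : x < ((n + K : ℕ) : ℝ) := by
      push_cast [hK]; linarith [Nat.cast_nonneg (α := ℝ) n]
    have hge : (n:ℝ) + 1 ≤ ((n + K : ℕ) : ℝ) - x := by push_cast [hK]; linarith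
    have hpos : (0:ℝ) < (n:ℝ) + 1 := by positivity
    have h3 : ((n:ℝ)+1)^3 ≤ (((n + K : ℕ) : ℝ) - x)^3 := by
      apply pow_le_pow_left₀ (by positivity) hge
    have h4 : ((n:ℝ)+1)^3 ≤ (((n + K : ℕ) : ℝ) - x)^4 := by
      calc ((n:ℝ)+1)^3 ≤ ((n:ℝ)+1)^4 := by
            apply pow_le_pow_right₀ (by linarith) (by norm_num)
        _ ≤ (((n + K : ℕ) : ℝ) - x)^4 := pow_le_pow_left₀ (by positivity) hge 4
    calc |bcoef x ((n + K : ℕ) : ℤ)|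
        ≤ x / (((n + K : ℕ) : ℝ) - x)^3 + 3 * x^2 / (((n + K : ℕ) : ℝ) - x)^4 :=
          bcoef_nat_bound hx _ hlt
      _ ≤ x / ((n:ℝ)+1)^3 + 3 * x^2 / ((n:ℝ)+1)^3 := by
          apply add_le_add
          · exact div_le_div₀ hx le_rfl (by positivity) h3
          · exact div_le_div₀ (by positivity) le_rfl (by positivity) h4
      _ = (x + 3 * x^2) * (1 / ((n:ℝ)+1)^3) := by ring
  apply Summable.of_nonneg_of_le (fun n => abs_nonneg _) hmaj
  apply Summable.mul_left
  have : Summable (fun n : ℕ => 1 / ((n:ℝ))^3) := by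
    rw [Real.summable_one_div_nat_pow]
    norm_num
  have h := (summable_nat_add_iff 1).mpr this
  apply h.congr
  intro n
  push_cast
  norm_num

lemma key_hasSum {x : ℝ} (hx : 0 ≤ x) (β₀ : ℝ) :
    HasSum (fun n : ℕ => 2 * bcoef x (n:ℤ) * Real.sin ((n:ℝ) * β₀))
      (Real.sin (x * Real.sin β₀)) := by
  haveI : Fact (0 < 2 * Real.pi) := ⟨by positivity⟩
  have hsumZ : Summable (fun n : ℤ => fourierCoeff (⇑(Fmap x)) n) := by
    have hre : (fun n : ℤ => fourierCoeff (⇑(Fmap x)) n)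
        = fun n : ℤ => -Complex.I * (bcoef x n : ℝ) := funext (fourierCoeff_Fmap x)
    rw [hre]
    apply Summable.of_nat_of_neg
    · apply Summable.of_norm
      apply (bcoef_abs_summable hx).congr
      intro n
      simp [norm_mul]
    · apply Summable.of_norm
      apply (bcoef_abs_summable hx).congr
      intro n
      simp [norm_mul, bcoef_neg]
  have H := has_pointwise_sum_fourier_series_of_summable hsumZ (β₀ : AddCircle (2 * Real.pi))
  have H2 := H.nat_add_neg
  have hfour : ∀ n : ℤ, (fourier n ((β₀ : ℝ) : AddCircle (2 * Real.pi)) : ℂ)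
      = Complex.exp (((n:ℝ) * β₀ : ℝ) * Complex.I) := by
    intro n
    rw [fourier_coe_apply]
    congr 1
    have hπ : (Real.pi : ℂ) ≠ 0 := Complex.ofReal_ne_zero.mpr Real.pi_ne_zero
    push_cast
    field_simp
  have hterm : ∀ n : ℕ,
      (fourierCoeff (⇑(Fmap x)) (n:ℤ) • fourier (n:ℤ) ((β₀ : ℝ) : AddCircle (2 * Real.pi))
        + fourierCoeff (⇑(Fmap x)) (-(n:ℤ)) • fourier (-(n:ℤ)) ((β₀ : ℝ) : AddCircle (2 * Real.pi)))
      = ((2 * bcoef x (n:ℤ) * Real.sin ((n:ℝ) * β₀) : ℝ) : ℂ) := by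
    intro n
    rw [fourierCoeff_Fmap, fourierCoeff_Fmap, smul_eq_mul, smul_eq_mul, hfour, hfour, bcoef_neg]
    rw [Complex.exp_mul_I, Complex.exp_mul_I]
    push_cast
    simp only [neg_mul, Complex.cos_neg, Complex.sin_neg]
    ring_nf
    rw [Complex.I_sq]
    ring
  have hzero : fourierCoeff (⇑(Fmap x)) (0:ℤ) • fourier (0:ℤ) ((β₀ : ℝ) : AddCircle (2 * Real.pi)) = 0 := by
    rw [fourierCoeff_Fmap, bcoef_even (Even.zero)]
    simp
  rw [hzero, add_zero] at H2
  have hFval : Fmap x ((β₀ : ℝ) : AddCircle (2 * Real.pi)) = ((Real.sin (x * Real.sin β₀) : ℝ) : ℂ) := by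
    rw [Fmap_coe]; rfl
  rw [hFval] at H2
  rw [← Complex.hasSum_ofReal]
  rw [funext hterm] at H2
  exact H2

lemma hasSum_w {x : ℝ} (hx : 0 ≤ x) (β₀ : ℝ) :
    HasSum (fun i : ℕ => (besselJ (2*(i:ℤ)+1) x + besselJ (2*(i:ℤ)+3) x)
        * Real.sin ((2*(i:ℝ)+2) * β₀))
      (Real.sin (x * Real.sin β₀) * Real.cos β₀) := by
  have h1 := (key_hasSum hx β₀).mul_right (Real.cos β₀)
  set u : ℕ → ℝ := fun n => bcoef x (n:ℤ) * Real.sin (((n:ℝ)+1) * β₀) with hu_def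
  set v : ℕ → ℝ := fun n => bcoef x (n:ℤ) * Real.sin (((n:ℝ)-1) * β₀) with hv_def
  have hterm : (fun n : ℕ => 2 * bcoef x (n:ℤ) * Real.sin ((n:ℝ) * β₀) * Real.cos β₀)
      = fun n => u n + v n := by
    funext n
    simp only [hu_def, hv_def]
    rw [add_mul, one_mul, sub_mul, one_mul, Real.sin_add, Real.sin_sub]
    ring
  rw [hterm] at h1
  have husum : Summable u := by
    apply Summable.of_norm_bounded (bcoef_abs_summable hx)
    intro n
    simp only [hu_def, Real.norm_eq_abs, abs_mul]
    calc |bcoef x (n:ℤ)| * |Real.sin (((n:ℝ)+1) * β₀)| ≤ |bcoef x (n:ℤ)| * 1 :=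
        mul_le_mul_of_nonneg_left (abs_sin_le_one _) (abs_nonneg _)
      _ = _ := mul_one _
  have huA : HasSum u (∑' n, u n) := husum.hasSum
  have hvB : HasSum v (Real.sin (x * Real.sin β₀) * Real.cos β₀ - ∑' n, u n) := by
    have := h1.sub huA
    apply this.congr_fun
    intro n
    ring
  have hinj : Function.Injective (fun i : ℕ => 2*i+1) := by
    intro a b h
    have : 2*a+1 = 2*b+1 := h
    omega
  have hvan : ∀ (w : ℕ → ℝ), (∀ n, w n = bcoef x (n:ℤ) * (w n / bcoef x (n:ℤ))) →
      True := fun _ _ => trivial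
  have hvanu : ∀ n ∉ Set.range (fun i : ℕ => 2*i+1), u n = 0 := by
    intro n hn
    have heven : Even n := by
      rcases Nat.even_or_odd n with h | h
      · exact h
      · exfalso; obtain ⟨m, hm⟩ := h; exact hn ⟨m, show 2*m+1 = n by omega⟩
    have : Even (n:ℤ) := by exact_mod_cast heven
    simp only [hu_def, bcoef_even this, zero_mul]
  have hvanv : ∀ n ∉ Set.range (fun i : ℕ => 2*i+1), v n = 0 := by
    intro n hn
    have heven : Even n := by
      rcases Nat.even_or_odd n with h | h
      · exact h
      · exfalso; obtain ⟨m, hm⟩ := h; exact hn ⟨m, show 2*m+1 = n by omega⟩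
    have : Even (n:ℤ) := by exact_mod_cast heven
    simp only [hv_def, bcoef_even this, zero_mul]
  have hAodd : HasSum (fun i : ℕ => u (2*i+1)) (∑' n, u n) :=
    (Function.Injective.hasSum_iff hinj hvanu).mpr huA
  have hBodd : HasSum (fun i : ℕ => v (2*i+1))
      (Real.sin (x * Real.sin β₀) * Real.cos β₀ - ∑' n, u n) :=
    (Function.Injective.hasSum_iff hinj hvanv).mpr hvB
  have hBshift : HasSum (fun i : ℕ => v (2*(i+1)+1))
      ((Real.sin (x * Real.sin β₀) * Real.cos β₀ - ∑' n, u n)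
        - ∑ i ∈ Finset.range 1, v (2*i+1)) :=
    (hasSum_nat_add_iff' (f := fun i : ℕ => v (2*i+1)) 1).mpr hBodd
  have hv1 : ∑ i ∈ Finset.range 1, v (2*i+1) = 0 := by
    simp [hv_def]
  rw [hv1, sub_zero] at hBshift
  have hfinal := hAodd.add hBshift
  have : (∑' n, u n) + (Real.sin (x * Real.sin β₀) * Real.cos β₀ - ∑' n, u n)
      = Real.sin (x * Real.sin β₀) * Real.cos β₀ := by ring
  rw [this] at hfinal
  apply hfinal.congr_fun
  intro i
  have hodd1 : Odd ((2*i+1 : ℕ) : ℤ) := ⟨i, by push_cast; ring⟩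
  have hodd3 : Odd ((2*(i+1)+1 : ℕ) : ℤ) := ⟨(i:ℤ)+1, by push_cast; ring⟩
  have e1 : bcoef x ((2*i+1 : ℕ) : ℤ) = besselJ (2*(i:ℤ)+1) x := by
    rw [← bcoef_odd hodd1]
    congr 1
    try (push_cast; ring)
  have e3 : bcoef x ((2*(i+1)+1 : ℕ) : ℤ) = besselJ (2*(i:ℤ)+3) x := by
    rw [← bcoef_odd hodd3]
    congr 1
    try (push_cast; ring)
  simp only [hu_def, hv_def]
  rw [e1, e3]
  have c1 : (((2*i+1 : ℕ) : ℝ) + 1) * β₀ = (2*(i:ℝ)+2) * β₀ := by push_cast; ring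
  have c3 : (((2*(i+1)+1 : ℕ) : ℝ) - 1) * β₀ = (2*(i:ℝ)+2) * β₀ := by push_cast; ring
  rw [c1, c3]
  ring


lemma summable_inv_shift {d : ℝ} (hd : 1 ≤ d) :
    Summable (fun i : ℕ => 1/(d+2*(i:ℝ))^2) := by
  have hg : Summable (fun i : ℕ => 1/((i:ℝ)+1)^2) := by
    have : Summable (fun i : ℕ => 1 / ((i:ℝ))^2) := by
      rw [Real.summable_one_div_nat_pow]
      norm_num
    have h := (summable_nat_add_iff 1).mpr this
    apply h.congr
    intro n
    push_cast
    norm_num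
  apply Summable.of_nonneg_of_le (fun i => by positivity) _ hg
  intro i
  apply div_le_div₀ zero_le_one le_rfl (by positivity)
  apply pow_le_pow_left₀ (by positivity) (by push_cast; linarith [Nat.cast_nonneg (α := ℝ) i])

lemma tsum_inv_shift_le {d : ℝ} (hd : 4 ≤ d) :
    (∑' i : ℕ, 1/(d+2*(i:ℝ))^2) ≤ 1/d := by
  set h : ℕ → ℝ := fun i => (1/2) * (1/(d-2+2*(i:ℝ))) with hh
  have hpos : ∀ i : ℕ, (0:ℝ) < d-2+2*(i:ℝ) := by
    intro i
    have : (0:ℝ) ≤ (i:ℝ) := Nat.cast_nonneg i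
    linarith
  have htel : HasSum (fun i : ℕ => h i - h (i+1)) (h 0) := by
    rw [hasSum_iff_tendsto_nat_of_nonneg]
    · have hsum : ∀ n : ℕ, ∑ i ∈ Finset.range n, (h i - h (i+1)) = h 0 - h n :=
        fun n => Finset.sum_range_sub' h n
      simp_rw [hsum]
      have hto : Tendsto h atTop (nhds 0) := by
        rw [hh]
        have h2 : Tendsto (fun i : ℕ => d-2+2*(i:ℝ)) atTop atTop := by
          apply Filter.tendsto_atTop_add_const_left
          apply Tendsto.const_mul_atTop (by norm_num : (0:ℝ) < 2)
          exact tendsto_natCast_atTop_atTop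
        have h3 : Tendsto (fun i : ℕ => 1/(d-2+2*(i:ℝ))) atTop (nhds 0) := by
          simp_rw [one_div]
          exact Tendsto.comp tendsto_inv_atTop_zero h2
        simpa using h3.const_mul (1/2 : ℝ)
      have := (tendsto_const_nhds (x := h 0) (f := atTop (α := ℕ))).sub hto
      simpa using this
    · intro i
      have h1 : d-2+2*(i:ℝ) ≤ d-2+2*((i:ℝ)+1) := by linarith
      have := hpos i
      have h2 : (0:ℝ) < d-2+2*((i:ℝ)+1) := by linarith
      simp only [hh]
      push_cast
      rw [sub_nonneg]
      apply mul_le_mul_of_nonneg_left _ (by norm_num)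
      apply div_le_div₀ zero_le_one le_rfl this h1
  have hle : ∀ i : ℕ, 1/(d+2*(i:ℝ))^2 ≤ h i - h (i+1) := by
    intro i
    have hp1 := hpos i
    have hp2 : (0:ℝ) < d+2*(i:ℝ) := by linarith
    have key : h i - h (i+1) = 1/((d-2+2*(i:ℝ))*(d+2*(i:ℝ))) := by
      have ha' : d-2+2*(i:ℝ) ≠ 0 := hp1.ne'
      have hb'' : d-2+2*((i:ℝ)+1) ≠ 0 := by
        intro hcon; apply hp2.ne'; linarith
      simp only [hh]
      push_cast
      field_simp
      ring
    rw [key]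
    apply div_le_div₀ zero_le_one le_rfl (by positivity)
    nlinarith
  calc (∑' i : ℕ, 1/(d+2*(i:ℝ))^2) ≤ ∑' i, (h i - h (i+1)) :=
        Summable.tsum_le_tsum hle (summable_inv_shift (by linarith)) htel.summable
    _ = h 0 := htel.tsum_eq
    _ ≤ 1/d := by
        simp only [hh]
        push_cast
        rw [mul_zero, add_zero]
        rw [show (1:ℝ)/2 * (1/(d-2)) = 1/(2*(d-2)) from by
          rw [div_mul_div_comm]; norm_num]
        apply one_div_le_one_div_of_le (by linarith) (by linarith)


/-- For `k ≥ 1` and `0 < t < 1`,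
`Σ_{j=1}^{N-1} (J_{2j-1}(2Nt) + J_{2j+1}(2Nt)) sin(kj/N) → sin(kt)` as `N → ∞`. -/
theorem besselJ_sum_tendsto_sin (k : ℕ) (hk : 1 ≤ k) (t : ℝ) (ht0 : 0 < t) (ht1 : t < 1) :
    Tendsto
      (fun N : ℕ => ∑ j ∈ Finset.Icc 1 (N - 1),
        (besselJ (2 * (j : ℤ) - 1) (2 * N * t) + besselJ (2 * (j : ℤ) + 1) (2 * N * t))
          * Real.sin ((k : ℝ) * j / N))
      atTop (nhds (Real.sin (k * t))) := by
  set S : ℕ → ℝ := fun N => ∑ j ∈ Finset.Icc 1 (N - 1),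
      (besselJ (2 * (j : ℤ) - 1) (2 * N * t) + besselJ (2 * (j : ℤ) + 1) (2 * N * t))
        * Real.sin ((k : ℝ) * j / N) with hS_def
  set β : ℕ → ℝ := fun N => (k : ℝ) / (2 * N) with hβ_def
  set w : ℕ → ℕ → ℝ := fun N i =>
      (besselJ (2*(i:ℤ)+1) (2*N*t) + besselJ (2*(i:ℤ)+3) (2*N*t))
        * Real.sin ((2*(i:ℝ)+2) * β N) with hw_def
  set L : ℕ → ℝ := fun N => Real.sin ((2*N*t) * Real.sin (β N)) * Real.cos (β N) with hL_def
  have hW : ∀ N : ℕ, HasSum (w N) (L N) := by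
    intro N
    exact hasSum_w (by positivity) (β N)
  -- Step 2 : S N is a partial sum of w N
  have hpartial : ∀ N : ℕ, 1 ≤ N → S N = ∑ i ∈ Finset.range (N-1), w N i := by
    intro N hN
    have hNR : (1:ℝ) ≤ (N:ℝ) := by exact_mod_cast hN
    have h1 : Finset.Icc 1 (N-1) = Finset.Ico 1 N := by
      rw [← Finset.Ico_add_one_right_eq_Icc]
      congr 1
      omega
    simp only [hS_def]
    rw [h1, Finset.sum_Ico_eq_sum_range]
    apply Finset.sum_congr rfl
    intro i _
    have hcast1 : (2 * ((1 + i : ℕ) : ℤ) - 1) = 2*(i:ℤ)+1 := by push_cast; ring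
    have hcast2 : (2 * ((1 + i : ℕ) : ℤ) + 1) = 2*(i:ℤ)+3 := by push_cast; ring
    rw [hcast1, hcast2]
    have hsin : (k : ℝ) * ((1 + i : ℕ) : ℝ) / N = (2*(i:ℝ)+2) * β N := by
      rw [hβ_def]
      push_cast
      field_simp
      ring
    rw [hsin]
  -- Step 3 : tail bound
  set C1 : ℝ := (4/(1-t) + 24/(1-t)^2) * (1/(1-t)) with hC1_def
  have h1t : (0:ℝ) < 1 - t := by linarith
  have htail : ∀ N : ℕ, 4 ≤ (N:ℝ)*(1-t) → |L N - S N| ≤ C1 * (1/(N:ℝ)) := by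
    intro N hd4
    have hN1 : 1 ≤ N := by
      rcases Nat.eq_zero_or_pos N with h | h
      · subst h
        norm_num at hd4
      · exact h
    set d : ℝ := (N:ℝ)*(1-t) with hd_def
    have hd1 : (1:ℝ) ≤ d := by linarith
    have hdpos : (0:ℝ) < d := by linarith
    have hNR : (1:ℝ) ≤ (N:ℝ) := by exact_mod_cast hN1
    have hNpos : (0:ℝ) < (N:ℝ) := by linarith
    set x : ℝ := 2*(N:ℝ)*t with hx_def
    have hx0 : 0 ≤ x := by positivity
    have hxN : x ≤ 2*(N:ℝ) := by nlinarith
    set K1 : ℝ := 2*x/d + 6*x^2/d^2 with hK1_def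
    have hK1nn : 0 ≤ K1 := by positivity
    have hcastN1 : ((N - 1 : ℕ) : ℝ) = (N:ℝ) - 1 := by
      rw [Nat.cast_sub hN1]; norm_num
    -- pointwise bound on the tail terms
    have hbound : ∀ i : ℕ, |w N (i + (N-1))| ≤ K1 * (1/(d+2*(i:ℝ))^2) := by
      intro i
      have hiR : (0:ℝ) ≤ (i:ℝ) := Nat.cast_nonneg i
      have hdi : (0:ℝ) < d + 2*(i:ℝ) := by linarith
      have hm1R : ((2*((i + (N-1) : ℕ) : ℤ)+1 : ℤ) : ℝ) = 2*(i:ℝ) + 2*(N:ℝ) - 1 := by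
        push_cast [hcastN1]
        ring
      have hm3R : ((2*((i + (N-1) : ℕ) : ℤ)+3 : ℤ) : ℝ) = 2*(i:ℝ) + 2*(N:ℝ) + 1 := by
        push_cast [hcastN1]
        ring
      have hkey1 : d + 2*(i:ℝ) ≤ (2*(i:ℝ) + 2*(N:ℝ) - 1) - x := by
        rw [hx_def, hd_def]; nlinarith
      have hkey3 : d + 2*(i:ℝ) ≤ (2*(i:ℝ) + 2*(N:ℝ) + 1) - x := by linarith
      have hxm1 : x < 2*(i:ℝ) + 2*(N:ℝ) - 1 := by linarith
      have hxm3 : x < 2*(i:ℝ) + 2*(N:ℝ) + 1 := by linarith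
      have hJ1 := besselJ_decay (m := 2*((i + (N-1) : ℕ) : ℤ)+1) hx0 (by rw [hm1R]; exact hxm1)
      have hJ3 := besselJ_decay (m := 2*((i + (N-1) : ℕ) : ℤ)+3) hx0 (by rw [hm3R]; exact hxm3)
      rw [hm1R] at hJ1
      rw [hm3R] at hJ3
      -- monotonicity in the denominator
      have hmono : ∀ y : ℝ, d + 2*(i:ℝ) ≤ y - x → x < y →
          x / (y - x)^3 + 3*x^2/(y - x)^4 ≤ x/(d+2*(i:ℝ))^3 + 3*x^2/(d+2*(i:ℝ))^4 := by
        intro y hy hxy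
        have h3 : (d+2*(i:ℝ))^3 ≤ (y - x)^3 := pow_le_pow_left₀ hdi.le hy 3
        have h4 : (d+2*(i:ℝ))^4 ≤ (y - x)^4 := pow_le_pow_left₀ hdi.le hy 4
        apply add_le_add
        · exact div_le_div₀ hx0 le_rfl (by positivity) h3
        · exact div_le_div₀ (by positivity) le_rfl (by positivity) h4
      have hJ1' : |besselJ (2*((i + (N-1) : ℕ) : ℤ)+1) x| ≤ x/(d+2*(i:ℝ))^3 + 3*x^2/(d+2*(i:ℝ))^4 :=
        le_trans hJ1 (hmono _ hkey1 hxm1)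
      have hJ3' : |besselJ (2*((i + (N-1) : ℕ) : ℤ)+3) x| ≤ x/(d+2*(i:ℝ))^3 + 3*x^2/(d+2*(i:ℝ))^4 :=
        le_trans hJ3 (hmono _ hkey3 hxm3)
      have habs : |w N (i + (N-1))| ≤ 2*x/(d+2*(i:ℝ))^3 + 6*x^2/(d+2*(i:ℝ))^4 := by
        rw [hw_def]
        simp only
        rw [abs_mul]
        calc |besselJ (2*((i + (N-1) : ℕ) : ℤ)+1) (2*N*t) + besselJ (2*((i + (N-1) : ℕ) : ℤ)+3) (2*N*t)|
              * |Real.sin ((2*((i + (N-1) : ℕ) : ℝ)+2) * β N)|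
            ≤ (|besselJ (2*((i + (N-1) : ℕ) : ℤ)+1) x| + |besselJ (2*((i + (N-1) : ℕ) : ℤ)+3) x|) * 1 := by
              apply mul_le_mul _ (abs_sin_le_one _) (abs_nonneg _) (by positivity)
              rw [← hx_def]
              exact abs_add_le _ _
          _ ≤ 2*x/(d+2*(i:ℝ))^3 + 6*x^2/(d+2*(i:ℝ))^4 := by
              rw [mul_one]
              calc |besselJ (2*((i + (N-1) : ℕ) : ℤ)+1) x| + |besselJ (2*((i + (N-1) : ℕ) : ℤ)+3) x|
                  ≤ (x/(d+2*(i:ℝ))^3 + 3*x^2/(d+2*(i:ℝ))^4) + (x/(d+2*(i:ℝ))^3 + 3*x^2/(d+2*(i:ℝ))^4) :=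
                    add_le_add hJ1' hJ3'
                _ = 2*x/(d+2*(i:ℝ))^3 + 6*x^2/(d+2*(i:ℝ))^4 := by ring
      calc |w N (i + (N-1))| ≤ 2*x/(d+2*(i:ℝ))^3 + 6*x^2/(d+2*(i:ℝ))^4 := habs
        _ ≤ K1 * (1/(d+2*(i:ℝ))^2) := by
            have e1 : 2*x/(d+2*(i:ℝ))^3 = (2*x/(d+2*(i:ℝ))) * (1/(d+2*(i:ℝ))^2) := by
              field_simp
            have e2 : 6*x^2/(d+2*(i:ℝ))^4 = (6*x^2/(d+2*(i:ℝ))^2) * (1/(d+2*(i:ℝ))^2) := by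
              field_simp
            rw [e1, e2, hK1_def, add_mul]
            apply add_le_add
            · apply mul_le_mul_of_nonneg_right _ (by positivity)
              apply div_le_div₀ (by positivity) le_rfl hdpos (by linarith)
            · apply mul_le_mul_of_nonneg_right _ (by positivity)
              apply div_le_div₀ (by positivity) le_rfl (by positivity)
              apply pow_le_pow_left₀ hdpos.le (by linarith)
    -- summability of the majorant and the tail
    have hmaj_sum : Summable (fun i : ℕ => K1 * (1/(d+2*(i:ℝ))^2)) :=
      (summable_inv_shift hd1).mul_left K1
    have hnorm_sum : Summable (fun i : ℕ => ‖w N (i + (N-1))‖) := by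
      apply Summable.of_nonneg_of_le (fun i => norm_nonneg _) _ hmaj_sum
      intro i
      rw [Real.norm_eq_abs]
      exact hbound i
    have htail_eq : L N - S N = ∑' i : ℕ, w N (i + (N-1)) := by
      have h := Summable.sum_add_tsum_nat_add (f := w N) (N-1) (hW N).summable
      rw [(hW N).tsum_eq] at h
      rw [hpartial N hN1]
      linarith
    rw [htail_eq]
    calc |∑' i : ℕ, w N (i + (N-1))| ≤ ∑' i : ℕ, ‖w N (i + (N-1))‖ := by
          rw [← Real.norm_eq_abs]
          exact norm_tsum_le_tsum_norm hnorm_sum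
      _ ≤ ∑' i : ℕ, K1 * (1/(d+2*(i:ℝ))^2) := by
          apply Summable.tsum_le_tsum _ hnorm_sum hmaj_sum
          intro i
          rw [Real.norm_eq_abs]
          exact hbound i
      _ = K1 * ∑' i : ℕ, 1/(d+2*(i:ℝ))^2 := tsum_mul_left
      _ ≤ K1 * (1/d) := mul_le_mul_of_nonneg_left (tsum_inv_shift_le hd4) hK1nn
      _ ≤ C1 * (1/(N:ℝ)) := by
          have hK1le : K1 ≤ 4/(1-t) + 24/(1-t)^2 := by
            rw [hK1_def]
            apply add_le_add
            · rw [div_le_div_iff₀ hdpos h1t, hd_def]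
              nlinarith
            · rw [div_le_div_iff₀ (by positivity) (by positivity), hd_def]
              have hx2 : x^2 ≤ 4*(N:ℝ)^2 := by nlinarith
              nlinarith [mul_le_mul_of_nonneg_right hx2 (sq_nonneg (1-t))]
          have hdinv : 1/d = (1/(1-t)) * (1/(N:ℝ)) := by
            rw [hd_def]; field_simp
          rw [hdinv, hC1_def]
          rw [← mul_assoc]
          apply mul_le_mul_of_nonneg_right _ (by positivity)
          apply mul_le_mul_of_nonneg_right hK1le (by positivity)
  -- Step 4 : limits
  have hβ0 : Tendsto β atTop (nhds 0) := by
    rw [hβ_def]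
    have h0 : Tendsto (fun N : ℕ => 1/(N:ℝ)) atTop (nhds 0) := tendsto_one_div_atTop_nhds_zero_nat
    have := h0.const_mul ((k:ℝ)/2)
    rw [mul_zero] at this
    apply this.congr
    intro N
    field_simp
  have hβne : ∀ᶠ N : ℕ in atTop, β N ≠ 0 := by
    filter_upwards [eventually_ge_atTop 1] with N hN
    have hNR : (1:ℝ) ≤ (N:ℝ) := by exact_mod_cast hN
    have : (0:ℝ) < (k:ℝ) := by exact_mod_cast hk
    rw [hβ_def]
    positivity
  have hratio : Tendsto (fun N => Real.sin (β N) / β N) atTop (nhds 1) := by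
    have hd := Real.hasDerivAt_sin 0
    rw [hasDerivAt_iff_tendsto_slope] at hd
    have hβin : Tendsto β atTop (nhdsWithin 0 {(0:ℝ)}ᶜ) := by
      apply tendsto_nhdsWithin_of_tendsto_nhds_of_eventually_within _ hβ0
      filter_upwards [hβne] with N hN
      exact hN
    have := hd.comp hβin
    rw [Real.cos_zero] at this
    apply this.congr
    intro N
    simp [Function.comp, slope_def_field]
  have hcosβ : Tendsto (fun N => Real.cos (β N)) atTop (nhds 1) := by
    have := (Real.continuous_cos.tendsto 0).comp hβ0
    rwa [Real.cos_zero] at this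
  have hA : Tendsto (fun N : ℕ => (2*(N:ℝ)*t) * Real.sin (β N)) atTop (nhds ((k:ℝ)*t)) := by
    have h1 : Tendsto (fun N : ℕ => ((k:ℝ)*t) * (Real.sin (β N) / β N)) atTop (nhds ((k:ℝ)*t)) := by
      have := hratio.const_mul ((k:ℝ)*t)
      simpa using this
    have heq : (fun N : ℕ => ((k:ℝ)*t) * (Real.sin (β N) / β N))
        =ᶠ[atTop] (fun N : ℕ => (2*(N:ℝ)*t) * Real.sin (β N)) := by
      filter_upwards [eventually_ge_atTop 1] with N hN
      have hNR : (1:ℝ) ≤ (N:ℝ) := by exact_mod_cast hN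
      have hk0 : (0:ℝ) < (k:ℝ) := by exact_mod_cast hk
      rw [hβ_def]
      field_simp
    exact h1.congr' heq
  have hL : Tendsto L atTop (nhds (Real.sin ((k:ℝ)*t))) := by
    have hsin : Tendsto (fun N : ℕ => Real.sin ((2*(N:ℝ)*t) * Real.sin (β N))) atTop
        (nhds (Real.sin ((k:ℝ)*t))) := (Real.continuous_sin.tendsto _).comp hA
    have := hsin.mul hcosβ
    rw [mul_one] at this
    exact this
  have hdiff : Tendsto (fun N => L N - S N) atTop (nhds 0) := by
    apply squeeze_zero_norm' (a := fun N : ℕ => C1 * (1/(N:ℝ)))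
    · filter_upwards [eventually_ge_atTop (⌈(4:ℝ)/(1-t)⌉₊)] with N hN
      have hcge : (4:ℝ)/(1-t) ≤ (N:ℝ) := le_trans (Nat.le_ceil _) (by exact_mod_cast hN)
      have h4 : 4 ≤ (N:ℝ)*(1-t) := by
        rw [div_le_iff₀ h1t] at hcge
        linarith
      simpa [Real.norm_eq_abs] using htail N h4
    · have := tendsto_one_div_atTop_nhds_zero_nat.const_mul C1
      simpa using this
  have hfinal := hL.sub hdiff
  rw [sub_zero] at hfinal
  have hfun : (fun N => L N - (L N - S N)) = S := by funext N; ring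
  rw [hfun] at hfinal
  exact hfinal
end
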